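/- arXiv:1101.1032 — 2 statements merged into one kernel-verified Lean document; each statement's English description precedes it below -/
import Mathlib

section
/- The following hold: (iii) ∫ x² dℙ_n^ε(x) → σ² almost surely; (iv) ∫ |x| dℙ_n^ε(x) → E|ε| almost surely; (v) limsup_{n→∞} ∫ |x|³ dℙ_n^ε(x) < ∞ almost surely. (Lemma 4.8(iii)–(v): moments of the centered residual empirical distribution.) -/
open MeasureTheory Filter Set

noncomputable section

/-- The least squares criterion `m_θ(x) = −(y − α·1{z ≤ ζ} − β·1{z > ζ})²`
for `θ = (α, β, ζ)` and `x = (y, z)`. -/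
def mfn (θ : ℝ × ℝ × ℝ) (x : ℝ × ℝ) : ℝ :=
  -(x.1 - (if x.2 ≤ θ.2.2 then θ.1 else θ.2.1)) ^ 2

/-- The residual function `ε̃_θ(y,z) = y − α·1{z ≤ ζ} − β·1{z > ζ}` for `θ = (α,β,ζ)`. -/
def epstil (θ : ℝ × ℝ × ℝ) (x : ℝ × ℝ) : ℝ :=
  x.1 - (if x.2 ≤ θ.2.2 then θ.1 else θ.2.1)

open Topology

lemma maxsub (x : ℝ) : max x 0 - max (-x) 0 = x := by
  rcases le_total x 0 with h|h
  · rw [max_eq_right h, max_eq_left (by linarith : (0:ℝ) ≤ -x)]; ring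
  · rw [max_eq_left h, max_eq_right (by linarith : -x ≤ (0:ℝ))]; ring

lemma habs2 (x y : ℝ) : |x - y| ≤ |x| + |y| := by
  calc |x - y| = |x + (-y)| := by ring_nf
    _ ≤ |x| + |(-y)| := abs_add_le _ _
    _ = |x| + |y| := by rw [abs_neg]

lemma habs4 (x1 x2 x3 x4 : ℝ) : |x1 + x2 - (x3 + x4)| ≤ |x1| + |x2| + (|x3| + |x4|) := by
  have h1 := habs2 (x1 + x2) (x3 + x4)
  have h2 := abs_add_le x1 x2
  have h3 := abs_add_le x3 x4
  linarith

lemma cube_add_le {x y : ℝ} (hx : 0 ≤ x) (hy : 0 ≤ y) : (x+y)^3 ≤ 4*x^3 + 4*y^3 := by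
  nlinarith [mul_nonneg (sq_nonneg (x - y)) (add_nonneg hx hy), mul_nonneg hx hy,
    mul_nonneg (mul_nonneg hx hy) (add_nonneg hx hy)]


lemma cdf_lip {f : ℝ → ℝ} {C : ℝ} (hC : ∀ z, f z ≤ C)
    (νZ : Measure ℝ) [IsProbabilityMeasure νZ]
    (hνZ : νZ = volume.withDensity (fun z => ENNReal.ofReal (f z)))
    {x y : ℝ} (hxy : x ≤ y) :
    0 ≤ (νZ (Iic y)).toReal - (νZ (Iic x)).toReal ∧
    (νZ (Iic y)).toReal - (νZ (Iic x)).toReal ≤ (max C 0) * (y - x) := by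
  have hfin : ∀ s : Set ℝ, νZ s ≠ ⊤ := fun s => (measure_lt_top νZ s).ne
  have hsplit : νZ (Iic y) = νZ (Iic x) + νZ (Ioc x y) := by
    rw [← Set.Iic_union_Ioc_eq_Iic hxy,
      measure_union (Set.Iic_disjoint_Ioc le_rfl) measurableSet_Ioc]
  have hIoc : νZ (Ioc x y) ≤ ENNReal.ofReal (max C 0) * ENNReal.ofReal (y - x) := by
    rw [hνZ, withDensity_apply _ measurableSet_Ioc]
    calc ∫⁻ z in Ioc x y, ENNReal.ofReal (f z) ∂volume
        ≤ ∫⁻ _ in Ioc x y, ENNReal.ofReal (max C 0) ∂volume := by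
          apply lintegral_mono
          intro z
          exact ENNReal.ofReal_le_ofReal (le_trans (hC z) (le_max_left _ _))
      _ = ENNReal.ofReal (max C 0) * volume (Ioc x y) := by
          rw [setLIntegral_const]
      _ = ENNReal.ofReal (max C 0) * ENNReal.ofReal (y - x) := by
          rw [Real.volume_Ioc]
  have h1 : (νZ (Iic y)).toReal - (νZ (Iic x)).toReal = (νZ (Ioc x y)).toReal := by
    rw [hsplit, ENNReal.toReal_add (hfin _) (hfin _)]; ring
  constructor
  · rw [h1]; exact ENNReal.toReal_nonneg
  · rw [h1]
    calc (νZ (Ioc x y)).toReal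
        ≤ (ENNReal.ofReal (max C 0) * ENNReal.ofReal (y - x)).toReal := by
          apply ENNReal.toReal_mono _ hIoc
          exact ENNReal.mul_ne_top ENNReal.ofReal_ne_top ENNReal.ofReal_ne_top
      _ = (max C 0) * (y - x) := by
          rw [ENNReal.toReal_mul, ENNReal.toReal_ofReal (le_max_right _ _),
            ENNReal.toReal_ofReal (by linarith)]

lemma quad_bound {u A B : ℝ} (hu : 0 ≤ u) (hA : 0 ≤ A) (hB : 0 ≤ B)
    (h : u^2 ≤ A + B*u) : u ≤ Real.sqrt A + B := by
  by_contra hc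
  push_neg at hc
  nlinarith [Real.sq_sqrt hA, Real.sqrt_nonneg A]

lemma key_ineq {z a b ζ₀ ζ α₀ β₀ α β : ℝ} (ha : a ≤ ζ₀) (hb : ζ₀ ≤ b)
    (ha' : a ≤ ζ) (hb' : ζ ≤ b) :
    (if z < a then (1:ℝ) else 0) * (α - α₀)^2 + (if b < z then (1:ℝ) else 0) * (β - β₀)^2
      ≤ ((if z ≤ ζ₀ then α₀ else β₀) - (if z ≤ ζ then α else β))^2 := by
  rcases lt_or_ge z a with h|h
  · rw [if_pos h, if_neg (by linarith), if_pos (by linarith), if_pos (by linarith)]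
    nlinarith
  · rcases lt_or_ge b z with h2|h2
    · rw [if_neg (not_lt.mpr h), if_pos h2, if_neg (by linarith), if_neg (by linarith)]
      nlinarith
    · rw [if_neg (not_lt.mpr h), if_neg (not_lt.mpr h2)]
      have : ((if z ≤ ζ₀ then α₀ else β₀) - (if z ≤ ζ then α else β))^2 ≥ 0 := sq_nonneg _
      linarith

lemma habs_bound {z ζ₀ ζ α₀ β₀ α β : ℝ} :
    |(if z ≤ ζ₀ then α₀ else β₀) - (if z ≤ ζ then α else β)|
      ≤ |α - α₀| + |β - β₀| + |α₀ - β₀| := by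
  have h1 := abs_nonneg (α - α₀)
  have h2 := abs_nonneg (β - β₀)
  have h3 := abs_nonneg (α₀ - β₀)
  split_ifs
  · have : |α₀ - α| = |α - α₀| := abs_sub_comm _ _
    linarith [le_refl (|α₀ - α|), this ▸ le_refl (|α₀ - α|), (abs_sub_comm α₀ α) ▸ h1]
  · calc |α₀ - β| ≤ |α₀ - β₀| + |β₀ - β| := abs_sub_le _ _ _
      _ = |α₀ - β₀| + |β - β₀| := by rw [abs_sub_comm β₀ β]
      _ ≤ _ := by linarith
  · calc |β₀ - α| ≤ |β₀ - α₀| + |α₀ - α| := abs_sub_le _ _ _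
      _ = |α₀ - β₀| + |α - α₀| := by rw [abs_sub_comm β₀ α₀, abs_sub_comm α₀ α]
      _ ≤ _ := by linarith
  · have : |β₀ - β| = |β - β₀| := abs_sub_comm _ _
    linarith [this ▸ le_refl (|β₀ - β|)]

lemma slln_comp {Ω : Type} [MeasurableSpace Ω] (P : Measure Ω)
    (ℙd : Measure (ℝ × ℝ))
    (Xd : ℕ → Ω → ℝ × ℝ) (hXdMeas : ∀ i, Measurable (Xd i))
    (hXdLaw : ∀ i, Measure.map (Xd i) P = ℙd)
    (hXdIndep : ProbabilityTheory.iIndepFun Xd P)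
    (φ : ℝ × ℝ → ℝ) (hφ : Measurable φ) (hint : Integrable φ ℙd) :
    ∀ᵐ ω ∂P, Tendsto (fun n : ℕ => (n:ℝ)⁻¹ * ∑ i ∈ Finset.range n, φ (Xd i ω))
      atTop (𝓝 (∫ x, φ x ∂ℙd)) := by
  have hmeas : ∀ i, Measurable (fun ω => φ (Xd i ω)) := fun i => hφ.comp (hXdMeas i)
  have hmap : ∀ i, Measure.map (fun ω => φ (Xd i ω)) P = Measure.map φ ℙd := by
    intro i
    rw [← hXdLaw i]
    exact (Measure.map_map hφ (hXdMeas i)).symm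
  have hident : ∀ i, ProbabilityTheory.IdentDistrib (fun ω => φ (Xd i ω))
      (fun ω => φ (Xd 0 ω)) P P :=
    fun i => ⟨(hmeas i).aemeasurable, (hmeas 0).aemeasurable, by rw [hmap i, hmap 0]⟩
  have hintP : Integrable φ (Measure.map (Xd 0) P) := by rw [hXdLaw 0]; exact hint
  have hint0 : Integrable (fun ω => φ (Xd 0 ω)) P :=
    (integrable_map_measure hφ.aestronglyMeasurable (hXdMeas 0).aemeasurable).mp hintP
  have hindep : Pairwise (Function.onFun (ProbabilityTheory.IndepFun · · P) (fun i ω => φ (Xd i ω))) :=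
    fun i j hij => (hXdIndep.indepFun hij).comp hφ hφ
  have hI : ∫ ω, φ (Xd 0 ω) ∂P = ∫ x, φ x ∂ℙd := by
    rw [← hXdLaw 0, integral_map (hXdMeas 0).aemeasurable hφ.aestronglyMeasurable]
  have := ProbabilityTheory.strong_law_ae_real (fun i ω => φ (Xd i ω)) hint0 hindep hident
  filter_upwards [this] with ω hω
  rw [← hI]
  convert hω using 2 with n
  rw [div_eq_inv_mul]

lemma polya {a b C : ℝ} (hC : 0 ≤ C) (G : ℕ → ℝ → ℝ) (L : ℝ → ℝ)
    (hmono : ∀ n, Monotone (G n))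
    (hLip : ∀ x y : ℝ, x ≤ y → 0 ≤ L y - L x ∧ L y - L x ≤ C * (y - x))
    (hconv : ∀ q : ℚ, Tendsto (fun n => G n (q : ℝ)) atTop (𝓝 (L (q : ℝ))))
    {ε : ℝ} (hε : 0 < ε) :
    ∀ᶠ n in atTop, ∀ ζ ∈ Icc a b, |G n ζ - L ζ| ≤ ε := by
  have hC1 : (0:ℝ) < C + 1 := by linarith
  set δ : ℝ := ε / (4 * (C + 1)) with hδdef
  have hδ : 0 < δ := by positivity
  have hCδ : 2 * C * δ ≤ ε / 2 := by
    have h1 : 2 * C * δ ≤ 2 * (C + 1) * δ := by nlinarith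
    have h2 : 2 * (C + 1) * δ = ε / 2 := by
      rw [hδdef]; field_simp; ring
    linarith
  have hr : ∀ j : ℕ, ∃ q : ℚ, a + j * δ - δ < (q:ℝ) ∧ (q:ℝ) < a + j * δ :=
    fun j => exists_rat_btwn (by linarith)
  choose r hr1 hr2 using hr
  set J : ℕ := ⌈(b - a) / δ⌉₊ + 2 with hJdef
  have hev : ∀ᶠ n in atTop, ∀ j ∈ Finset.range (J + 1),
      |G n ((r j : ℝ)) - L ((r j : ℝ))| ≤ ε / 2 := by
    rw [Filter.eventually_all_finset]
    intro j _
    have h := Metric.tendsto_atTop.mp (hconv (r j)) (ε/2) (by positivity)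
    obtain ⟨N, hN⟩ := h
    filter_upwards [eventually_ge_atTop N] with n hn
    have := hN n hn
    rw [Real.dist_eq] at this
    linarith
  filter_upwards [hev] with n hn ζ hζ
  set j : ℕ := ⌊(ζ - a) / δ⌋₊ with hjdef
  have h0 : (0:ℝ) ≤ (ζ - a) / δ := div_nonneg (by linarith [hζ.1]) hδ.le
  have hfl : (j : ℝ) ≤ (ζ - a) / δ := Nat.floor_le h0
  have hfl2 : (ζ - a) / δ < (j : ℝ) + 1 := Nat.lt_floor_add_one _
  have hlo : a + j * δ ≤ ζ := by
    have := (le_div_iff₀ hδ).mp hfl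
    linarith
  have hhi : ζ < a + ((j:ℝ) + 1) * δ := by
    have := (div_lt_iff₀ hδ).mp hfl2
    linarith
  have hjJ : j + 2 ∈ Finset.range (J + 1) := by
    rw [Finset.mem_range]
    have h1 : j ≤ ⌈(b - a) / δ⌉₊ := by
      have h2 : (ζ - a) / δ ≤ (b - a) / δ := by
        gcongr
        linarith [hζ.2]
      calc j = ⌊(ζ - a) / δ⌋₊ := rfl
        _ ≤ ⌊(b - a) / δ⌋₊ := Nat.floor_le_floor h2
        _ ≤ ⌈(b - a) / δ⌉₊ := Nat.floor_le_ceil _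
    omega
  have hj0 : j ∈ Finset.range (J + 1) := by
    rw [Finset.mem_range] at hjJ ⊢; omega
  have e1 := hn j hj0
  have e2 := hn (j+2) hjJ
  -- lower bound
  have hrjζ : (r j : ℝ) ≤ ζ := by
    have := hr2 j; linarith
  have hζrj2 : ζ ≤ (r (j+2) : ℝ) := by
    have := hr1 (j+2); push_cast at this ⊢; nlinarith
  have m1 : G n (r j : ℝ) ≤ G n ζ := hmono n hrjζ
  have m2 : G n ζ ≤ G n (r (j+2) : ℝ) := hmono n hζrj2
  have l1 := hLip (r j : ℝ) ζ hrjζ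
  have l2 := hLip ζ (r (j+2) : ℝ) hζrj2
  have d1 : ζ - (r j : ℝ) ≤ 2 * δ := by
    have := hr1 j; push_cast at this; nlinarith
  have d2 : (r (j+2) : ℝ) - ζ ≤ 2 * δ := by
    have := hr2 (j+2); push_cast at this; nlinarith
  rw [abs_le] at e1 e2 ⊢
  constructor
  · nlinarith [l1.2, e1.1, e1.2]
  · nlinarith [l2.2, e2.1, e2.2]

lemma sum_resid_eq_zero (n : ℕ) (X : ℕ → ℝ × ℝ) (θ : ℝ × ℝ × ℝ)
    (hmax : ∀ θ' : ℝ × ℝ × ℝ, θ'.2.2 = θ.2.2 →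
      (n:ℝ)⁻¹ * ∑ i ∈ Finset.range n, mfn θ' (X i)
        ≤ (n:ℝ)⁻¹ * ∑ i ∈ Finset.range n, mfn θ (X i)) :
    ∑ i ∈ Finset.range n, epstil θ (X i) = 0 := by
  obtain ⟨A, B, Z⟩ := θ
  rcases Nat.eq_zero_or_pos n with h0|hpos
  · simp [h0]
  have hn : (0:ℝ) < (n:ℝ)⁻¹ := inv_pos.mpr (Nat.cast_pos.mpr hpos)
  set χ : ℕ → ℝ := fun i => if (X i).2 ≤ Z then 1 else 0 with hχ
  set S1 : ℝ := ∑ i ∈ Finset.range n, epstil (A, B, Z) (X i) * χ i with hS1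
  set S2 : ℝ := ∑ i ∈ Finset.range n, epstil (A, B, Z) (X i) * (1 - χ i) with hS2
  set N1 : ℝ := ∑ i ∈ Finset.range n, χ i with hN1
  set N2 : ℝ := ∑ i ∈ Finset.range n, (1 - χ i) with hN2
  have hN1nn : 0 ≤ N1 := Finset.sum_nonneg fun i _ => by
    rw [hχ]; dsimp only; split_ifs <;> norm_num
  have hN2nn : 0 ≤ N2 := Finset.sum_nonneg fun i _ => by
    rw [hχ]; dsimp only; split_ifs <;> norm_num
  -- generic: a perturbation inequality gives the group sum zero
  have key : ∀ t S N : ℝ, 0 ≤ N → (2*t*S - t^2*N ≤ 0) → t = S / (N+1) → S = 0 := by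
    intro t S N hN hle ht
    have hq : (0:ℝ) < N + 1 := by linarith
    have h3 : (2*t*S - t^2*N) * (N+1)^2 ≤ 0 :=
      mul_nonpos_of_nonpos_of_nonneg hle (sq_nonneg _)
    have h4 : (2*t*S - t^2*N) * (N+1)^2 = S^2*(N+2) := by
      rw [ht]; field_simp; ring
    have h5 : S^2 ≤ 0 := by nlinarith
    have h6 : S^2 = 0 := le_antisymm h5 (sq_nonneg S)
    exact pow_eq_zero_iff two_ne_zero |>.mp h6
  -- α-perturbation
  have hSz1 : S1 = 0 := by
    set t : ℝ := S1 / (N1 + 1) with htdef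
    have h1 := hmax (A + t, B, Z) rfl
    have hterm : ∀ i ∈ Finset.range n, mfn (A + t, B, Z) (X i)
        = mfn (A, B, Z) (X i) + (2*t*(epstil (A, B, Z) (X i) * χ i) - t^2 * χ i) := by
      intro i _
      by_cases hi : (X i).2 ≤ Z
      · simp only [mfn, epstil, hχ, if_pos hi]; ring
      · simp only [mfn, epstil, hχ, if_neg hi]; ring
    rw [Finset.sum_congr rfl hterm, Finset.sum_add_distrib, Finset.sum_sub_distrib,
      ← Finset.mul_sum, ← Finset.mul_sum, ← hS1, ← hN1, mul_add] at h1
    have hle : 2*t*S1 - t^2*N1 ≤ 0 := by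
      by_contra hc
      push_neg at hc
      nlinarith [mul_pos hn hc]
    exact key t S1 N1 hN1nn hle htdef
  -- β-perturbation
  have hSz2 : S2 = 0 := by
    set t : ℝ := S2 / (N2 + 1) with htdef
    have h1 := hmax (A, B + t, Z) rfl
    have hterm : ∀ i ∈ Finset.range n, mfn (A, B + t, Z) (X i)
        = mfn (A, B, Z) (X i) + (2*t*(epstil (A, B, Z) (X i) * (1 - χ i)) - t^2 * (1 - χ i)) := by
      intro i _
      by_cases hi : (X i).2 ≤ Z
      · simp only [mfn, epstil, hχ, if_pos hi]; ring
      · simp only [mfn, epstil, hχ, if_neg hi]; ring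
    rw [Finset.sum_congr rfl hterm, Finset.sum_add_distrib, Finset.sum_sub_distrib,
      ← Finset.mul_sum, ← Finset.mul_sum, ← hS2, ← hN2, mul_add] at h1
    have hle : 2*t*S2 - t^2*N2 ≤ 0 := by
      by_contra hc
      push_neg at hc
      nlinarith [mul_pos hn hc]
    exact key t S2 N2 hN2nn hle htdef
  have : ∑ i ∈ Finset.range n, epstil (A, B, Z) (X i) = S1 + S2 := by
    rw [hS1, hS2, ← Finset.sum_add_distrib]
    exact Finset.sum_congr rfl fun i _ => by ring
  rw [this, hSz1, hSz2, add_zero]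

set_option maxHeartbeats 2000000 in
lemma core (α₀ β₀ a b ζ₀ σ2 Iabs I3 pa pb Ep CL : ℝ) (F : ℝ → ℝ)
    (hζ₀ : ζ₀ ∈ Icc a b)
    (hpa : 0 < pa) (hpb : 0 < pb) (hCL : 0 ≤ CL) (hEp : 0 ≤ Ep)
    (hFlip : ∀ x y : ℝ, x ≤ y → 0 ≤ F y - F x ∧ F y - F x ≤ CL * (y - x))
    (X : ℕ → ℝ × ℝ) (θh : ℕ → ℝ × ℝ × ℝ)
    (hT1 : Tendsto (fun n : ℕ => (n:ℝ)⁻¹ * ∑ i ∈ Finset.range n,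
      epstil (α₀, β₀, ζ₀) (X i)) atTop (𝓝 0))
    (hT2 : Tendsto (fun n : ℕ => (n:ℝ)⁻¹ * ∑ i ∈ Finset.range n,
      (epstil (α₀, β₀, ζ₀) (X i))^2) atTop (𝓝 σ2))
    (hTabs : Tendsto (fun n : ℕ => (n:ℝ)⁻¹ * ∑ i ∈ Finset.range n,
      |epstil (α₀, β₀, ζ₀) (X i)|) atTop (𝓝 Iabs))
    (hT3 : Tendsto (fun n : ℕ => (n:ℝ)⁻¹ * ∑ i ∈ Finset.range n,
      |epstil (α₀, β₀, ζ₀) (X i)|^3) atTop (𝓝 I3))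
    (hpaT : Tendsto (fun n : ℕ => (n:ℝ)⁻¹ * ∑ i ∈ Finset.range n,
      (if (X i).2 < a then (1:ℝ) else 0)) atTop (𝓝 pa))
    (hpbT : Tendsto (fun n : ℕ => (n:ℝ)⁻¹ * ∑ i ∈ Finset.range n,
      (if b < (X i).2 then (1:ℝ) else 0)) atTop (𝓝 pb))
    (hGp : ∀ q : ℚ, Tendsto (fun n : ℕ => (n:ℝ)⁻¹ * ∑ i ∈ Finset.range n,
      (if (X i).2 ≤ (q:ℝ) then (1:ℝ) else 0) * max (epstil (α₀, β₀, ζ₀) (X i)) 0)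
      atTop (𝓝 (F (q:ℝ) * Ep)))
    (hGm : ∀ q : ℚ, Tendsto (fun n : ℕ => (n:ℝ)⁻¹ * ∑ i ∈ Finset.range n,
      (if (X i).2 ≤ (q:ℝ) then (1:ℝ) else 0) * max (-(epstil (α₀, β₀, ζ₀) (X i))) 0)
      atTop (𝓝 (F (q:ℝ) * Ep)))
    (hmax : ∀ n : ℕ, (θh n).2.2 ∈ Icc a b ∧ ∀ θ : ℝ × ℝ × ℝ, θ.2.2 ∈ Icc a b →
      (n:ℝ)⁻¹ * ∑ i ∈ Finset.range n, mfn θ (X i)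
        ≤ (n:ℝ)⁻¹ * ∑ i ∈ Finset.range n, mfn (θh n) (X i)) :
    Tendsto (fun n : ℕ => (n:ℝ)⁻¹ * ∑ j ∈ Finset.range n,
        (epstil (θh n) (X j) - (n:ℝ)⁻¹ * ∑ l ∈ Finset.range n, epstil (θh n) (X l)) ^ 2)
      atTop (𝓝 σ2) ∧
    Tendsto (fun n : ℕ => (n:ℝ)⁻¹ * ∑ j ∈ Finset.range n,
        |epstil (θh n) (X j) - (n:ℝ)⁻¹ * ∑ l ∈ Finset.range n, epstil (θh n) (X l)|)
      atTop (𝓝 Iabs) ∧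
    IsBoundedUnder (· ≤ ·) atTop (fun n : ℕ => (n:ℝ)⁻¹ * ∑ j ∈ Finset.range n,
        |epstil (θh n) (X j) - (n:ℝ)⁻¹ * ∑ l ∈ Finset.range n, epstil (θh n) (X l)| ^ 3) := by
  -- residual average is zero
  have hbar : ∀ n : ℕ, ∑ l ∈ Finset.range n, epstil (θh n) (X l) = 0 := by
    intro n
    apply sum_resid_eq_zero n X (θh n)
    intro θ' hθ'
    exact (hmax n).2 θ' (by rw [hθ']; exact (hmax n).1)
  -- abbreviations
  set ee : ℕ → ℝ := fun i => epstil (α₀, β₀, ζ₀) (X i) with hee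
  set hh : ℕ → ℕ → ℝ := fun n j => epstil (θh n) (X j) - ee j with hhh
  set A : ℕ → ℝ → ℝ := fun n ζ => (n:ℝ)⁻¹ * ∑ i ∈ Finset.range n,
    (if (X i).2 ≤ ζ then (1:ℝ) else 0) * ee i with hA
  set D : ℕ → ℝ := fun n => (n:ℝ)⁻¹ * ∑ i ∈ Finset.range n, (hh n i)^2 with hD
  set Cc : ℕ → ℝ := fun n => (n:ℝ)⁻¹ * ∑ i ∈ Finset.range n, ee i * hh n i with hCc
  set v : ℕ → ℝ := fun n => |(θh n).1 - α₀| + |(θh n).2.1 - β₀| with hv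
  have hsplit : ∀ n i, epstil (θh n) (X i) = ee i + hh n i := by
    intro n i; simp [hhh]
  have hhform : ∀ n i, hh n i = (if (X i).2 ≤ ζ₀ then α₀ else β₀)
      - (if (X i).2 ≤ (θh n).2.2 then (θh n).1 else (θh n).2.1) := by
    intro n i
    simp only [hhh, hee, epstil]
    ring
  have hinv0 : ∀ n : ℕ, (0:ℝ) ≤ (n:ℝ)⁻¹ := fun n => inv_nonneg.mpr (Nat.cast_nonneg n)
  have hD0 : ∀ n, 0 ≤ D n := fun n =>
    mul_nonneg (hinv0 n) (Finset.sum_nonneg fun i _ => sq_nonneg _)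
  have hv0 : ∀ n, 0 ≤ v n := fun n => add_nonneg (abs_nonneg _) (abs_nonneg _)
  have hmfn : ∀ (θ : ℝ × ℝ × ℝ) (x : ℝ × ℝ), mfn θ x = -(epstil θ x)^2 := fun _ _ => rfl
  -- RSS inequality
  have hRSS : ∀ n : ℕ, (n:ℝ)⁻¹ * ∑ i ∈ Finset.range n, (epstil (θh n) (X i))^2
      ≤ (n:ℝ)⁻¹ * ∑ i ∈ Finset.range n, (ee i)^2 := by
    intro n
    have h := (hmax n).2 (α₀, β₀, ζ₀) hζ₀
    simp only [hmfn, Finset.sum_neg_distrib, mul_neg, neg_le_neg_iff] at h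
    exact h
  -- decomposition
  have hdecomp : ∀ n : ℕ, (n:ℝ)⁻¹ * ∑ i ∈ Finset.range n, (epstil (θh n) (X i))^2
      = ((n:ℝ)⁻¹ * ∑ i ∈ Finset.range n, (ee i)^2) + 2 * Cc n + D n := by
    intro n
    have h1 : ∑ i ∈ Finset.range n, (epstil (θh n) (X i))^2
        = ∑ i ∈ Finset.range n, ((ee i)^2 + (2 * (ee i * hh n i) + (hh n i)^2)) := by
      refine Finset.sum_congr rfl fun i _ => ?_
      rw [hsplit n i]; ring
    rw [h1, Finset.sum_add_distrib, Finset.sum_add_distrib, ← Finset.mul_sum,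
      hCc, hD]
    simp only
    ring
  have hDC : ∀ n, D n ≤ -2 * Cc n := by
    intro n
    have h := hRSS n
    rw [hdecomp n] at h
    linarith
  -- C formula
  have hC_formula : ∀ n : ℕ, Cc n =
      (α₀ * A n ζ₀ + β₀ * (((n:ℝ)⁻¹ * ∑ i ∈ Finset.range n, ee i) - A n ζ₀))
      - ((θh n).1 * A n (θh n).2.2
        + (θh n).2.1 * (((n:ℝ)⁻¹ * ∑ i ∈ Finset.range n, ee i) - A n (θh n).2.2)) := by
    intro n
    have hterm : ∀ i ∈ Finset.range n, ee i * hh n i =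
        (α₀ * ((if (X i).2 ≤ ζ₀ then (1:ℝ) else 0) * ee i)
          + β₀ * (ee i - (if (X i).2 ≤ ζ₀ then (1:ℝ) else 0) * ee i))
        - ((θh n).1 * ((if (X i).2 ≤ (θh n).2.2 then (1:ℝ) else 0) * ee i)
          + (θh n).2.1 * (ee i - (if (X i).2 ≤ (θh n).2.2 then (1:ℝ) else 0) * ee i)) := by
      intro i _
      rw [hhform n i]
      by_cases h1 : (X i).2 ≤ ζ₀ <;> by_cases h2 : (X i).2 ≤ (θh n).2.2 <;>
        simp [h1, h2] <;> ring
    rw [hCc]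
    simp only
    rw [Finset.sum_congr rfl hterm, Finset.sum_sub_distrib, Finset.sum_add_distrib,
      Finset.sum_add_distrib, ← Finset.mul_sum, ← Finset.mul_sum, ← Finset.mul_sum,
      ← Finset.mul_sum, Finset.sum_sub_distrib, Finset.sum_sub_distrib]
    simp only [hA]
    ring
  -- lower bound for D
  have hlow : ∀ n : ℕ,
      ((n:ℝ)⁻¹ * ∑ i ∈ Finset.range n, (if (X i).2 < a then (1:ℝ) else 0)) * ((θh n).1 - α₀)^2
      + ((n:ℝ)⁻¹ * ∑ i ∈ Finset.range n, (if b < (X i).2 then (1:ℝ) else 0)) * ((θh n).2.1 - β₀)^2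
      ≤ D n := by
    intro n
    have hterm : ∀ i ∈ Finset.range n,
        (if (X i).2 < a then (1:ℝ) else 0) * ((θh n).1 - α₀)^2
          + (if b < (X i).2 then (1:ℝ) else 0) * ((θh n).2.1 - β₀)^2 ≤ (hh n i)^2 := by
      intro i _
      rw [hhform n i]
      exact key_ineq hζ₀.1 hζ₀.2 ((hmax n).1).1 ((hmax n).1).2
    have h := mul_le_mul_of_nonneg_left (Finset.sum_le_sum hterm) (hinv0 n)
    rw [Finset.sum_add_distrib, ← Finset.sum_mul, ← Finset.sum_mul] at h
    calc ((n:ℝ)⁻¹ * ∑ i ∈ Finset.range n, (if (X i).2 < a then (1:ℝ) else 0)) * ((θh n).1 - α₀)^2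
        + ((n:ℝ)⁻¹ * ∑ i ∈ Finset.range n, (if b < (X i).2 then (1:ℝ) else 0)) * ((θh n).2.1 - β₀)^2
        = (n:ℝ)⁻¹ * ((∑ i ∈ Finset.range n, (if (X i).2 < a then (1:ℝ) else 0)) * ((θh n).1 - α₀)^2
          + (∑ i ∈ Finset.range n, (if b < (X i).2 then (1:ℝ) else 0)) * ((θh n).2.1 - β₀)^2) := by
          ring
      _ ≤ (n:ℝ)⁻¹ * ∑ i ∈ Finset.range n, (hh n i)^2 := h
      _ = D n := by rw [hD]
  -- bound on |C|
  have hCbound : ∀ n : ℕ, |Cc n| ≤ (|α₀| + |β₀| + (|(θh n).1| + |(θh n).2.1|))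
      * (|(n:ℝ)⁻¹ * ∑ i ∈ Finset.range n, ee i| + |A n ζ₀| + |A n (θh n).2.2|) := by
    intro n
    set T1 : ℝ := (n:ℝ)⁻¹ * ∑ i ∈ Finset.range n, ee i with hT1def
    set sn : ℝ := |T1| + |A n ζ₀| + |A n (θh n).2.2| with hsn
    have hsn1 : |A n ζ₀| ≤ sn := by
      rw [hsn]; have := abs_nonneg T1; have := abs_nonneg (A n (θh n).2.2); linarith
    have hsn2 : |A n (θh n).2.2| ≤ sn := by
      rw [hsn]; have := abs_nonneg T1; have := abs_nonneg (A n ζ₀); linarith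
    have hsn3 : |T1 - A n ζ₀| ≤ sn := by
      have := habs2 T1 (A n ζ₀)
      rw [hsn]; have := abs_nonneg (A n (θh n).2.2); linarith
    have hsn4 : |T1 - A n (θh n).2.2| ≤ sn := by
      have := habs2 T1 (A n (θh n).2.2)
      rw [hsn]; have := abs_nonneg (A n ζ₀); linarith
    have h0 := habs4 (α₀ * A n ζ₀) (β₀ * (T1 - A n ζ₀))
      ((θh n).1 * A n (θh n).2.2) ((θh n).2.1 * (T1 - A n (θh n).2.2))
    rw [hC_formula n]
    have e1 : |α₀ * A n ζ₀| ≤ |α₀| * sn := by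
      rw [abs_mul]; exact mul_le_mul_of_nonneg_left hsn1 (abs_nonneg _)
    have e2 : |β₀ * (T1 - A n ζ₀)| ≤ |β₀| * sn := by
      rw [abs_mul]; exact mul_le_mul_of_nonneg_left hsn3 (abs_nonneg _)
    have e3 : |(θh n).1 * A n (θh n).2.2| ≤ |(θh n).1| * sn := by
      rw [abs_mul]; exact mul_le_mul_of_nonneg_left hsn2 (abs_nonneg _)
    have e4 : |(θh n).2.1 * (T1 - A n (θh n).2.2)| ≤ |(θh n).2.1| * sn := by
      rw [abs_mul]; exact mul_le_mul_of_nonneg_left hsn4 (abs_nonneg _)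
    calc |α₀ * A n ζ₀ + β₀ * (T1 - A n ζ₀)
          - ((θh n).1 * A n (θh n).2.2 + (θh n).2.1 * (T1 - A n (θh n).2.2))|
        ≤ |α₀ * A n ζ₀| + |β₀ * (T1 - A n ζ₀)|
          + (|(θh n).1 * A n (θh n).2.2| + |(θh n).2.1 * (T1 - A n (θh n).2.2)|) := h0
      _ ≤ (|α₀| + |β₀| + (|(θh n).1| + |(θh n).2.1|)) * sn := by nlinarith
  -- uniform smallness of A on [a,b]
  have hUnif : ∀ δ : ℝ, 0 < δ → ∀ᶠ n in atTop, ∀ ζ ∈ Icc a b, |A n ζ| ≤ δ := by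
    intro δ hδ
    set Gp : ℕ → ℝ → ℝ := fun n ζ => (n:ℝ)⁻¹ * ∑ i ∈ Finset.range n,
      (if (X i).2 ≤ ζ then (1:ℝ) else 0) * max (ee i) 0 with hGpdef
    set Gm : ℕ → ℝ → ℝ := fun n ζ => (n:ℝ)⁻¹ * ∑ i ∈ Finset.range n,
      (if (X i).2 ≤ ζ then (1:ℝ) else 0) * max (-(ee i)) 0 with hGmdef
    have hindmono : ∀ (w : ℝ) (hw : 0 ≤ w) (x y : ℝ), x ≤ y → ∀ z : ℝ,
        (if z ≤ x then (1:ℝ) else 0) * w ≤ (if z ≤ y then (1:ℝ) else 0) * w := by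
      intro w hw x y hxy z
      by_cases h1 : z ≤ x
      · rw [if_pos h1, if_pos (le_trans h1 hxy)]
      · rw [if_neg h1, zero_mul]
        positivity
    have hmonoGp : ∀ n, Monotone (Gp n) := by
      intro n x y hxy
      rw [hGpdef]
      exact mul_le_mul_of_nonneg_left (Finset.sum_le_sum fun i _ =>
        hindmono _ (le_max_right _ _) x y hxy _) (hinv0 n)
    have hmonoGm : ∀ n, Monotone (Gm n) := by
      intro n x y hxy
      rw [hGmdef]
      exact mul_le_mul_of_nonneg_left (Finset.sum_le_sum fun i _ =>
        hindmono _ (le_max_right _ _) x y hxy _) (hinv0 n)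
    have hLip : ∀ x y : ℝ, x ≤ y → 0 ≤ F y * Ep - F x * Ep
        ∧ F y * Ep - F x * Ep ≤ (CL * Ep) * (y - x) := by
      intro x y hxy
      obtain ⟨l1, l2⟩ := hFlip x y hxy
      constructor
      · have : F y * Ep - F x * Ep = (F y - F x) * Ep := by ring
        rw [this]; exact mul_nonneg l1 hEp
      · have : F y * Ep - F x * Ep = (F y - F x) * Ep := by ring
        rw [this]
        calc (F y - F x) * Ep ≤ (CL * (y - x)) * Ep := mul_le_mul_of_nonneg_right l2 hEp
          _ = (CL * Ep) * (y - x) := by ring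
    have hp1 := polya (a := a) (b := b) (mul_nonneg hCL hEp) Gp (fun ζ => F ζ * Ep)
      hmonoGp hLip (fun q => hGp q) (half_pos hδ)
    have hp2 := polya (a := a) (b := b) (mul_nonneg hCL hEp) Gm (fun ζ => F ζ * Ep)
      hmonoGm hLip (fun q => hGm q) (half_pos hδ)
    have hAsplit : ∀ n ζ, A n ζ = Gp n ζ - Gm n ζ := by
      intro n ζ
      rw [hA, hGpdef, hGmdef]
      simp only
      rw [← mul_sub, ← Finset.sum_sub_distrib]
      congr 1
      refine Finset.sum_congr rfl fun i _ => ?_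
      rw [← mul_sub, maxsub]
    filter_upwards [hp1, hp2] with n h1 h2 ζ hζm
    have e1 := h1 ζ hζm
    have e2 := h2 ζ hζm
    rw [hAsplit n ζ]
    have : Gp n ζ - Gm n ζ = (Gp n ζ - F ζ * Ep) - (Gm n ζ - F ζ * Ep) := by ring
    rw [this]
    calc |(Gp n ζ - F ζ * Ep) - (Gm n ζ - F ζ * Ep)|
        ≤ |Gp n ζ - F ζ * Ep| + |Gm n ζ - F ζ * Ep| := habs2 _ _
      _ ≤ δ := by linarith
  -- A at ζ₀ and at ζ̂ tends to 0
  have hAz : Tendsto (fun n => A n ζ₀) atTop (𝓝 0) := by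
    rw [Metric.tendsto_atTop]
    intro δ hδ
    obtain ⟨N, hN⟩ := eventually_atTop.mp (hUnif (δ/2) (half_pos hδ))
    exact ⟨N, fun n hn => by
      rw [Real.dist_eq, sub_zero]
      have := hN n hn ζ₀ hζ₀
      linarith⟩
  have hAzh : Tendsto (fun n => A n (θh n).2.2) atTop (𝓝 0) := by
    rw [Metric.tendsto_atTop]
    intro δ hδ
    obtain ⟨N, hN⟩ := eventually_atTop.mp (hUnif (δ/2) (half_pos hδ))
    exact ⟨N, fun n hn => by
      rw [Real.dist_eq, sub_zero]
      have := hN n hn (θh n).2.2 (hmax n).1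
      linarith⟩
  -- s tends to 0
  have hsT : Tendsto (fun n : ℕ => |(n:ℝ)⁻¹ * ∑ i ∈ Finset.range n, ee i|
      + |A n ζ₀| + |A n (θh n).2.2|) atTop (𝓝 0) := by
    have := (hT1.abs.add hAz.abs).add hAzh.abs
    simpa using this
  -- v tends to 0
  have hvT : Tendsto v atTop (𝓝 0) := by
    clear_value ee hh A D Cc v
    set K0 : ℝ := |α₀| + |β₀| with hK0
    have hK00 : 0 ≤ K0 := add_nonneg (abs_nonneg _) (abs_nonneg _)
    set m0 : ℝ := min pa pb with hm0
    have hm00 : 0 < m0 := lt_min hpa hpb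
    have hmnT : Tendsto (fun n : ℕ =>
        min ((n:ℝ)⁻¹ * ∑ i ∈ Finset.range n, (if (X i).2 < a then (1:ℝ) else 0))
          ((n:ℝ)⁻¹ * ∑ i ∈ Finset.range n, (if b < (X i).2 then (1:ℝ) else 0)))
        atTop (𝓝 m0) := hpaT.min hpbT
    rw [Metric.tendsto_atTop]
    intro ε hε
    set δ : ℝ := min (m0 * ε^2 / (64 * (K0 + 1))) (m0 * ε / 32) with hδdef
    have hδpos : 0 < δ := by
      apply lt_min <;> positivity
    have hev1 := hmnT.eventually (eventually_gt_nhds (by linarith : m0/2 < m0))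
    have hev2 := hsT.eventually (eventually_lt_nhds hδpos)
    obtain ⟨N, hN⟩ := eventually_atTop.mp (hev1.and hev2)
    refine ⟨N, fun n hn => ?_⟩
    obtain ⟨h1, h2⟩ := hN n hn
    rw [Real.dist_eq, sub_zero, abs_of_nonneg (hv0 n)]
    set pan : ℝ := (n:ℝ)⁻¹ * ∑ i ∈ Finset.range n, (if (X i).2 < a then (1:ℝ) else 0) with hpan
    set pbn : ℝ := (n:ℝ)⁻¹ * ∑ i ∈ Finset.range n, (if b < (X i).2 then (1:ℝ) else 0) with hpbn
    set sn : ℝ := |(n:ℝ)⁻¹ * ∑ i ∈ Finset.range n, ee i| + |A n ζ₀| + |A n (θh n).2.2| with hsnd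
    have hsn0 : 0 ≤ sn := by
      rw [hsnd]
      have h01 := abs_nonneg ((n:ℝ)⁻¹ * ∑ i ∈ Finset.range n, ee i)
      have h02 := abs_nonneg (A n ζ₀)
      have h03 := abs_nonneg (A n (θh n).2.2)
      linarith
    clear_value K0 m0 δ pan pbn sn
    have hahb : |(θh n).1| + |(θh n).2.1| ≤ K0 + v n := by
      have e1 : |(θh n).1| ≤ |α₀| + |(θh n).1 - α₀| := by
        have := abs_add_le α₀ ((θh n).1 - α₀)
        simpa using this
      have e2 : |(θh n).2.1| ≤ |β₀| + |(θh n).2.1 - β₀| := by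
        have := abs_add_le β₀ ((θh n).2.1 - β₀)
        simpa using this
      rw [hK0, hv]
      simp only
      linarith
    have hvsq : (v n)^2 ≤ 2*((θh n).1 - α₀)^2 + 2*((θh n).2.1 - β₀)^2 := by
      rw [hv]
      simp only
      nlinarith [sq_abs ((θh n).1 - α₀), sq_abs ((θh n).2.1 - β₀),
        sq_nonneg (|(θh n).1 - α₀| - |(θh n).2.1 - β₀|)]
    have hx2 := sq_nonneg ((θh n).1 - α₀)
    have hy2 := sq_nonneg ((θh n).2.1 - β₀)
    have hpan_ge : m0/2 ≤ pan := le_of_lt (lt_of_lt_of_le h1 (min_le_left _ _))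
    have hpbn_ge : m0/2 ≤ pbn := le_of_lt (lt_of_lt_of_le h1 (min_le_right _ _))
    have hv2m := mul_le_mul_of_nonneg_left hvsq (by linarith : (0:ℝ) ≤ m0/2)
    have hstep1 : (m0/2) * (v n)^2 ≤ 2 * D n := by
      nlinarith [hv2m, mul_le_mul_of_nonneg_right hpan_ge hx2,
        mul_le_mul_of_nonneg_right hpbn_ge hy2, hlow n]
    have hstep2 : D n ≤ 2 * ((K0 + K0 + v n) * sn) := by
      have hc := hCbound n
      have hd := hDC n
      have habs : -2 * Cc n ≤ 2 * |Cc n| := by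
        have := neg_abs_le (Cc n)
        linarith
      rw [← hsnd] at hc
      have hmono2 : (K0 + (|(θh n).1| + |(θh n).2.1|)) * sn
          ≤ (K0 + (K0 + v n)) * sn :=
        mul_le_mul_of_nonneg_right (by linarith) hsn0
      calc D n ≤ -2 * Cc n := hd
        _ ≤ 2 * |Cc n| := habs
        _ ≤ 2 * ((K0 + (|(θh n).1| + |(θh n).2.1|)) * sn) := by linarith
        _ ≤ 2 * ((K0 + (K0 + v n)) * sn) := by linarith
        _ = 2 * ((K0 + K0 + v n) * sn) := by ring
    have hs' : sn ≤ δ := le_of_lt h2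
    have h8 : (m0/2) * (v n)^2 ≤ 4 * ((2*K0 + v n) * δ) := by
      have hco : 0 ≤ K0 + K0 + v n := by linarith [hv0 n]
      have h10 : 4 * ((K0 + K0 + v n) * sn) ≤ 4 * ((2*K0 + v n) * δ) := by
        have := mul_le_mul_of_nonneg_left hs' hco
        nlinarith
      linarith [hstep1, hstep2]
    have h11 : m0 * (v n)^2 ≤ 16*(K0+1)*δ + 8*δ*(v n) := by
      linarith [h8, hδpos.le]
    have hquad : (v n)^2 ≤ (16*(K0+1)*δ/m0) + (8*δ/m0)*(v n) := by
      rw [div_mul_eq_mul_div, ← add_div, le_div_iff₀ hm00]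
      linarith [h11]
    have hA'nn : (0:ℝ) ≤ 16*(K0+1)*δ/m0 :=
      div_nonneg (by nlinarith [hδpos.le, hK00]) hm00.le
    have hB'nn : (0:ℝ) ≤ 8*δ/m0 := div_nonneg (by linarith [hδpos.le]) hm00.le
    have hvle := quad_bound (hv0 n) hA'nn hB'nn hquad
    have hA'le : 16*(K0+1)*δ/m0 ≤ ε^2/4 := by
      have hδ1 : δ ≤ m0*ε^2/(64*(K0+1)) := by rw [hδdef]; exact min_le_left _ _
      rw [div_le_iff₀ hm00]
      have h12 := mul_le_mul_of_nonneg_left hδ1 (by positivity : (0:ℝ) ≤ 16*(K0+1))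
      have hK1 : K0 + 1 ≠ 0 := by linarith
      have h13 : 16*(K0+1)*(m0*ε^2/(64*(K0+1))) = ε^2/4*m0 := by
        field_simp
        ring
      linarith
    have hsqle : Real.sqrt (16*(K0+1)*δ/m0) ≤ ε/2 := by
      have := Real.sqrt_le_sqrt hA'le
      have h14 : Real.sqrt (ε^2/4) = ε/2 := by
        rw [show ε^2/4 = (ε/2)^2 by ring, Real.sqrt_sq (by positivity)]
      linarith
    have hB'le : 8*δ/m0 ≤ ε/4 := by
      have hδ2 : δ ≤ m0*ε/32 := by rw [hδdef]; exact min_le_right _ _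
      rw [div_le_iff₀ hm00]
      nlinarith
    calc v n ≤ Real.sqrt (16*(K0+1)*δ/m0) + 8*δ/m0 := hvle
      _ ≤ ε/2 + ε/4 := by linarith
      _ < ε := by linarith
  -- estimator convergence
  have hahT : Tendsto (fun n => (θh n).1) atTop (𝓝 α₀) :=
    tendsto_iff_dist_tendsto_zero.mpr (squeeze_zero (fun n => dist_nonneg)
      (fun n => by
        rw [Real.dist_eq]
        exact le_trans (le_add_of_nonneg_right (abs_nonneg ((θh n).2.1 - β₀))) (le_of_eq (by rw [hv])))
      hvT)
  have hbhT : Tendsto (fun n => (θh n).2.1) atTop (𝓝 β₀) :=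
    tendsto_iff_dist_tendsto_zero.mpr (squeeze_zero (fun n => dist_nonneg)
      (fun n => by
        rw [Real.dist_eq]
        exact le_trans (le_add_of_nonneg_left (abs_nonneg ((θh n).1 - α₀))) (le_of_eq (by rw [hv])))
      hvT)
  have hCcT : Tendsto Cc atTop (𝓝 0) := by
    have hb1 : Tendsto (fun n : ℕ =>
        α₀ * A n ζ₀ + β₀ * (((n:ℝ)⁻¹ * ∑ i ∈ Finset.range n, ee i) - A n ζ₀)
        - ((θh n).1 * A n (θh n).2.2
          + (θh n).2.1 * (((n:ℝ)⁻¹ * ∑ i ∈ Finset.range n, ee i) - A n (θh n).2.2)))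
        atTop (𝓝 (α₀ * 0 + β₀ * (0 - 0) - (α₀ * 0 + β₀ * (0 - 0)))) :=
      ((tendsto_const_nhds.mul hAz).add (tendsto_const_nhds.mul (hT1.sub hAz))).sub
        ((hahT.mul hAzh).add (hbhT.mul (hT1.sub hAzh)))
    have hb2 := hb1
    rw [show (α₀ * 0 + β₀ * (0 - 0) - (α₀ * 0 + β₀ * (0 - 0))) = (0:ℝ) by ring] at hb2
    exact Tendsto.congr (fun n => (hC_formula n).symm) hb2
  have hDT : Tendsto D atTop (𝓝 0) := by
    have h2 : Tendsto (fun n => -2 * Cc n) atTop (𝓝 0) := by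
      have := hCcT.const_mul (-2 : ℝ)
      simpa using this
    exact squeeze_zero hD0 hDC h2
  have hinvn : ∀ n : ℕ, (n:ℝ)⁻¹ * (n:ℝ) ≤ 1 := by
    intro n
    rcases Nat.eq_zero_or_pos n with h|h
    · simp [h]
    · rw [inv_mul_cancel₀ (ne_of_gt (Nat.cast_pos.mpr h))]
  refine ⟨?_, ?_, ?_⟩
  -- (iii)
  · have hmain : Tendsto (fun n : ℕ => (n:ℝ)⁻¹ * ∑ j ∈ Finset.range n,
        (epstil (θh n) (X j))^2) atTop (𝓝 σ2) := by
      have hsum : Tendsto (fun n : ℕ =>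
          ((n:ℝ)⁻¹ * ∑ i ∈ Finset.range n, (ee i)^2) + 2 * Cc n + D n) atTop (𝓝 σ2) := by
        have := (hT2.add (hCcT.const_mul (2:ℝ))).add hDT
        simpa using this
      exact Tendsto.congr (fun n => (hdecomp n).symm) hsum
    refine Tendsto.congr (fun n => ?_) hmain
    rw [hbar n, mul_zero]
    simp only [sub_zero]
  -- (iv)
  · have hCS : ∀ n : ℕ, (n:ℝ)⁻¹ * ∑ j ∈ Finset.range n, |hh n j| ≤ Real.sqrt (D n) := by
      intro n
      have hDval : D n = (n:ℝ)⁻¹ * ∑ j ∈ Finset.range n, (hh n j)^2 := by rw [hD]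
      have hnn : 0 ≤ (n:ℝ)⁻¹ * ∑ j ∈ Finset.range n, |hh n j| :=
        mul_nonneg (hinv0 n) (Finset.sum_nonneg fun j _ => abs_nonneg _)
      apply (Real.le_sqrt hnn (hD0 n)).mpr
      rw [hDval]
      have hcs := Finset.sum_mul_sq_le_sq_mul_sq (Finset.range n)
        (fun _ => (1:ℝ)) (fun j => |hh n j|)
      simp only [one_mul, one_pow, Finset.sum_const, Finset.card_range, nsmul_eq_mul,
        sq_abs] at hcs
      have hsum2nn : 0 ≤ ∑ j ∈ Finset.range n, (hh n j)^2 :=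
        Finset.sum_nonneg fun j _ => sq_nonneg _
      have hp1 := mul_le_mul_of_nonneg_left hcs (sq_nonneg ((n:ℝ)⁻¹))
      have hp2 := mul_le_mul_of_nonneg_right (hinvn n)
        (mul_nonneg (hinv0 n) hsum2nn)
      nlinarith [hp1, hp2]
    have hWdiff : ∀ n : ℕ, abs (((n:ℝ)⁻¹ * ∑ j ∈ Finset.range n, |epstil (θh n) (X j)|)
        - (n:ℝ)⁻¹ * ∑ i ∈ Finset.range n, |ee i|) ≤ Real.sqrt (D n) := by
      intro n
      have h1 : ((n:ℝ)⁻¹ * ∑ j ∈ Finset.range n, |epstil (θh n) (X j)|)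
          - (n:ℝ)⁻¹ * ∑ i ∈ Finset.range n, |ee i|
          = (n:ℝ)⁻¹ * ∑ j ∈ Finset.range n, (|epstil (θh n) (X j)| - |ee j|) := by
        rw [Finset.sum_sub_distrib, mul_sub]
      rw [h1]
      calc abs ((n:ℝ)⁻¹ * ∑ j ∈ Finset.range n, (|epstil (θh n) (X j)| - |ee j|))
          ≤ (n:ℝ)⁻¹ * ∑ j ∈ Finset.range n, abs (|epstil (θh n) (X j)| - |ee j|) := by
            rw [abs_mul, abs_of_nonneg (hinv0 n)]
            exact mul_le_mul_of_nonneg_left (Finset.abs_sum_le_sum_abs _ _) (hinv0 n)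
        _ ≤ (n:ℝ)⁻¹ * ∑ j ∈ Finset.range n, |hh n j| := by
            refine mul_le_mul_of_nonneg_left (Finset.sum_le_sum fun j _ => ?_) (hinv0 n)
            exact le_trans (abs_abs_sub_abs_le_abs_sub _ _) (le_of_eq (by rw [hhh]))
        _ ≤ Real.sqrt (D n) := hCS n
    have hsqrtDT : Tendsto (fun n => Real.sqrt (D n)) atTop (𝓝 0) := by
      have := (Real.continuous_sqrt.tendsto 0).comp hDT
      simpa [Function.comp_def, Real.sqrt_zero] using this
    have hdiffT : Tendsto (fun n : ℕ => ((n:ℝ)⁻¹ * ∑ j ∈ Finset.range n,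
        |epstil (θh n) (X j)|) - (n:ℝ)⁻¹ * ∑ i ∈ Finset.range n, |ee i|) atTop (𝓝 0) :=
      squeeze_zero_norm (fun n => by rw [Real.norm_eq_abs]; exact hWdiff n) hsqrtDT
    have hWT : Tendsto (fun n : ℕ => (n:ℝ)⁻¹ * ∑ j ∈ Finset.range n,
        |epstil (θh n) (X j)|) atTop (𝓝 Iabs) := by
      have h := hTabs.add hdiffT
      rw [add_zero] at h
      exact Tendsto.congr (fun n => by ring) h
    refine Tendsto.congr (fun n => ?_) hWT
    rw [hbar n, mul_zero]
    simp only [sub_zero]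
  -- (v)
  · have hK1 : (0:ℝ) ≤ |α₀ - β₀| := abs_nonneg _
    have hc3 : (0:ℝ) ≤ 1 + |α₀ - β₀| := by linarith
    have hvev : ∀ᶠ n in atTop, v n ≤ 1 := hvT.eventually (eventually_le_nhds one_pos)
    have hT3ev : ∀ᶠ n : ℕ in atTop,
        ((n:ℝ)⁻¹ * ∑ i ∈ Finset.range n, |ee i|^3) ≤ I3 + 1 :=
      hT3.eventually (eventually_le_nhds (lt_add_one I3))
    apply isBoundedUnder_of_eventually_le
      (a := 4*(I3+1) + 4*(1 + |α₀ - β₀|)^3)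
    filter_upwards [hvev, hT3ev] with n h1 h2
    have hterm : ∀ j ∈ Finset.range n,
        |epstil (θh n) (X j) - (n:ℝ)⁻¹ * ∑ l ∈ Finset.range n, epstil (θh n) (X l)|^3
          ≤ 4*|ee j|^3 + 4*(1 + |α₀ - β₀|)^3 := by
      intro j _
      rw [hbar n, mul_zero, sub_zero]
      have h3 : |hh n j| ≤ v n + |α₀ - β₀| := by
        have h5 : v n + |α₀ - β₀|
            = |(θh n).1 - α₀| + |(θh n).2.1 - β₀| + |α₀ - β₀| := by
          rw [hv]
        rw [h5, hhform n j]
        exact habs_bound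
      have hb : |epstil (θh n) (X j)| ≤ |ee j| + (1 + |α₀ - β₀|) := by
        calc |epstil (θh n) (X j)| = |ee j + hh n j| := by rw [hsplit n j]
          _ ≤ |ee j| + |hh n j| := abs_add_le _ _
          _ ≤ |ee j| + (1 + |α₀ - β₀|) := by linarith
      calc |epstil (θh n) (X j)|^3 ≤ (|ee j| + (1 + |α₀ - β₀|))^3 :=
            pow_le_pow_left₀ (abs_nonneg _) hb 3
        _ ≤ 4*|ee j|^3 + 4*(1 + |α₀ - β₀|)^3 := cube_add_le (abs_nonneg _) hc3
    have hsum := mul_le_mul_of_nonneg_left (Finset.sum_le_sum hterm) (hinv0 n)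
    have hconst : (n:ℝ)⁻¹ * ∑ j ∈ Finset.range n, (4*|ee j|^3 + 4*(1 + |α₀ - β₀|)^3)
        ≤ 4*((n:ℝ)⁻¹ * ∑ i ∈ Finset.range n, |ee i|^3) + 4*(1 + |α₀ - β₀|)^3 := by
      rw [Finset.sum_add_distrib, ← Finset.mul_sum, Finset.sum_const, Finset.card_range,
        mul_add]
      have h5 : (n:ℝ)⁻¹ * ((n : ℕ) • (4*(1 + |α₀ - β₀|)^3)) ≤ 4*(1 + |α₀ - β₀|)^3 := by
        rw [nsmul_eq_mul]
        have hc4 : (0:ℝ) ≤ 4*(1 + |α₀ - β₀|)^3 := by positivity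
        nlinarith [mul_le_mul_of_nonneg_right (hinvn n) hc4]
      have h6 : (n:ℝ)⁻¹ * (4 * ∑ i ∈ Finset.range n, |ee i|^3)
          = 4*((n:ℝ)⁻¹ * ∑ i ∈ Finset.range n, |ee i|^3) := by ring
      linarith [h6]
    calc (n:ℝ)⁻¹ * ∑ j ∈ Finset.range n,
        |epstil (θh n) (X j) - (n:ℝ)⁻¹ * ∑ l ∈ Finset.range n, epstil (θh n) (X l)|^3
        ≤ (n:ℝ)⁻¹ * ∑ j ∈ Finset.range n, (4*|ee j|^3 + 4*(1 + |α₀ - β₀|)^3) := hsum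
      _ ≤ 4*((n:ℝ)⁻¹ * ∑ i ∈ Finset.range n, |ee i|^3) + 4*(1 + |α₀ - β₀|)^3 := hconst
      _ ≤ 4*(I3+1) + 4*(1 + |α₀ - β₀|)^3 := by linarith

set_option maxHeartbeats 2000000 in
/-- Lemma 4.8(iii)–(v): moments of the centered residual empirical distribution:
`∫x² dℙ_n^ε → σ²` a.s., `∫|x| dℙ_n^ε → E|ε|` a.s., and
`limsup_n ∫|x|³ dℙ_n^ε < ∞` a.s. -/
theorem stmt13
    {Ω : Type} [MeasurableSpace Ω] (P : Measure Ω) [IsProbabilityMeasure P]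
    -- model parameters
    (α₀ β₀ a b ζ₀ σ2 Mbd : ℝ) (f : ℝ → ℝ)
    (νZ νε : Measure ℝ) [IsProbabilityMeasure νZ] [IsProbabilityMeasure νε]
    (ℙd : Measure (ℝ × ℝ))
    (hab : a < b) (hζ₀ : ζ₀ ∈ Icc a b) (hαβ : α₀ ≠ β₀)
    -- `Z` has a bounded density `f`, positive on `[a,b]`, bounded away from `0` near `ζ₀`
    (hνZ : νZ = volume.withDensity (fun z => ENNReal.ofReal (f z)))
    (hfbd : ∃ C, ∀ z, f z ≤ C)
    (hfpos : ∀ z ∈ Icc a b, 0 < f z)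
    (hfloc : ∃ η₀ > (0 : ℝ), ∃ κ > (0 : ℝ), ∀ z, |z - ζ₀| ≤ η₀ → κ < f z)
    (hZa : 0 < νZ (Iio a)) (hZb : 0 < νZ (Ioi b))
    -- `ε` has a continuous distribution, mean `0`, variance `σ² > 0`, finite third moment
    (hεcont : ∀ x : ℝ, νε {x} = 0)
    (hεmean : ∫ x, x ∂νε = 0)
    (hεL2 : Integrable (fun x => x ^ 2) νε)
    (hεvar : ∫ x, x ^ 2 ∂νε = σ2) (hσ : 0 < σ2)
    (hεL3 : Integrable (fun x => |x| ^ 3) νε)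
    -- `ℙd` is the law of `(Y, Z)` with `Y = α₀·1{Z≤ζ₀} + β₀·1{Z>ζ₀} + ε`, `ε ⟂ Z`
    (hℙd : ℙd = Measure.map
      (fun p : ℝ × ℝ => ((if p.1 ≤ ζ₀ then α₀ else β₀) + p.2, p.1)) (νZ.prod νε))
    -- i.i.d. data `(X_i) = (Y_i, Z_i)` with law `ℙd`
    (Xd : ℕ → Ω → ℝ × ℝ) (hXdMeas : ∀ i, Measurable (Xd i))
    (hXdLaw : ∀ i, Measure.map (Xd i) P = ℙd)
    (hXdIndep : ProbabilityTheory.iIndepFun Xd P)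
    -- the least squares estimator `θ̂_n = (α̂_n, β̂_n, ζ̂_n)`, a measurable maximizer
    -- of `M_n` over `Θ = ℝ² × [a,b]`
    (θhat : ℕ → Ω → ℝ × ℝ × ℝ) (hθhatMeas : ∀ n, Measurable (θhat n))
    (hθhatMax : ∀ n, ∀ᵐ ω ∂P, (θhat n ω).2.2 ∈ Icc a b ∧
      ∀ θ : ℝ × ℝ × ℝ, θ.2.2 ∈ Icc a b →
        (n : ℝ)⁻¹ * ∑ i ∈ Finset.range n, mfn θ (Xd i ω)
          ≤ (n : ℝ)⁻¹ * ∑ i ∈ Finset.range n, mfn (θhat n ω) (Xd i ω)) :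
    -- conclusion
    (∀ᵐ ω ∂P, Tendsto (fun n : ℕ => (n : ℝ)⁻¹ * ∑ j ∈ Finset.range n,
        (epstil (θhat n ω) (Xd j ω)
          - (n : ℝ)⁻¹ * ∑ l ∈ Finset.range n, epstil (θhat n ω) (Xd l ω)) ^ 2)
      atTop (nhds σ2)) ∧
    (∀ᵐ ω ∂P, Tendsto (fun n : ℕ => (n : ℝ)⁻¹ * ∑ j ∈ Finset.range n,
        |epstil (θhat n ω) (Xd j ω)
          - (n : ℝ)⁻¹ * ∑ l ∈ Finset.range n, epstil (θhat n ω) (Xd l ω)|)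
      atTop (nhds (∫ x : ℝ, |x| ∂νε))) ∧
    (∀ᵐ ω ∂P, IsBoundedUnder (· ≤ ·) atTop (fun n : ℕ =>
      (n : ℝ)⁻¹ * ∑ j ∈ Finset.range n,
        |epstil (θhat n ω) (Xd j ω)
          - (n : ℝ)⁻¹ * ∑ l ∈ Finset.range n, epstil (θhat n ω) (Xd l ω)| ^ 3)) := by
  subst hℙd
  obtain ⟨Cf, hCf⟩ := hfbd
  -- measurability preliminaries
  have hT : Measurable (fun p : ℝ × ℝ => ((if p.1 ≤ ζ₀ then α₀ else β₀) + p.2, p.1)) := by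
    apply Measurable.prodMk _ measurable_fst
    exact (Measurable.ite (measurable_fst measurableSet_Iic) measurable_const
      measurable_const).add measurable_snd
  have hmeps : Measurable (epstil (α₀, β₀, ζ₀)) := by
    apply Measurable.sub measurable_fst
    exact Measurable.ite (measurable_snd measurableSet_Iic) measurable_const measurable_const
  have hcompT : ∀ p : ℝ × ℝ,
      epstil (α₀, β₀, ζ₀) ((if p.1 ≤ ζ₀ then α₀ else β₀) + p.2, p.1) = p.2 := by
    intro p
    simp only [epstil]
    ring
  -- integrability over νε
  have hg12 : Integrable (fun x : ℝ => 1 + x^2) νε := by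
    simpa using (integrable_const (1:ℝ)).add hεL2
  have hInt1 : Integrable (fun x : ℝ => x) νε := by
    apply Integrable.mono' hg12 measurable_id.aestronglyMeasurable
    filter_upwards with x
    simp only [Real.norm_eq_abs, id]
    nlinarith [abs_nonneg x, sq_abs x]
  have hIntAbs : Integrable (fun x : ℝ => |x|) νε := hInt1.abs
  have hIntMax : Integrable (fun x : ℝ => max x 0) νε := by
    apply Integrable.mono' hIntAbs (measurable_id.max measurable_const).aestronglyMeasurable
    filter_upwards with x
    simp only [Real.norm_eq_abs, id]
    rcases le_total x 0 with h|h
    · rw [max_eq_right h]; simp [abs_nonneg]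
    · rw [max_eq_left h, abs_of_nonneg h]
  have hIntMaxN : Integrable (fun x : ℝ => max (-x) 0) νε := by
    apply Integrable.mono' hIntAbs
      (measurable_id.neg.max measurable_const).aestronglyMeasurable
    filter_upwards with x
    simp only [Real.norm_eq_abs, id, Pi.neg_apply]
    rcases le_total x 0 with h|h
    · rw [max_eq_left (by linarith), abs_neg, abs_of_nonpos h]
    · rw [max_eq_right (by linarith)]; simp [abs_nonneg]
  -- product-integral tool
  have hpd_int : ∀ (u v : ℝ → ℝ), Measurable u → Measurable v →
      Integrable u νZ → Integrable v νε →
      Integrable (fun x => u x.2 * v (epstil (α₀, β₀, ζ₀) x))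
        (Measure.map (fun p : ℝ × ℝ => ((if p.1 ≤ ζ₀ then α₀ else β₀) + p.2, p.1))
          (νZ.prod νε)) ∧
      ∫ x, u x.2 * v (epstil (α₀, β₀, ζ₀) x)
          ∂(Measure.map (fun p : ℝ × ℝ => ((if p.1 ≤ ζ₀ then α₀ else β₀) + p.2, p.1))
            (νZ.prod νε))
        = (∫ z, u z ∂νZ) * ∫ e, v e ∂νε := by
    intro u v hu hv hIu hIv
    have hφm : Measurable (fun x => u x.2 * v (epstil (α₀, β₀, ζ₀) x)) :=
      (hu.comp measurable_snd).mul (hv.comp hmeps)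
    have hcomp : (fun p : ℝ × ℝ => u ((((if p.1 ≤ ζ₀ then α₀ else β₀) + p.2, p.1) : ℝ × ℝ)).2
        * v (epstil (α₀, β₀, ζ₀) ((if p.1 ≤ ζ₀ then α₀ else β₀) + p.2, p.1)))
        = fun p : ℝ × ℝ => u p.1 * v p.2 := by
      funext p
      rw [hcompT p]
    have hIprod : Integrable (fun p : ℝ × ℝ => u p.1 * v p.2) (νZ.prod νε) :=
      hIu.mul_prod hIv
    constructor
    · rw [integrable_map_measure hφm.aestronglyMeasurable hT.aemeasurable]
      show Integrable ((fun x => u x.2 * v (epstil (α₀, β₀, ζ₀) x)) ∘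
        (fun p : ℝ × ℝ => ((if p.1 ≤ ζ₀ then α₀ else β₀) + p.2, p.1))) (νZ.prod νε)
      have h2 : ((fun x => u x.2 * v (epstil (α₀, β₀, ζ₀) x)) ∘
          (fun p : ℝ × ℝ => ((if p.1 ≤ ζ₀ then α₀ else β₀) + p.2, p.1)))
          = fun p : ℝ × ℝ => u p.1 * v p.2 := by
        funext p
        exact congrFun hcomp p
      rw [h2]
      exact hIprod
    · rw [integral_map hT.aemeasurable hφm.aestronglyMeasurable]
      calc ∫ p, u ((((if p.1 ≤ ζ₀ then α₀ else β₀) + p.2, p.1) : ℝ × ℝ)).2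
            * v (epstil (α₀, β₀, ζ₀) ((if p.1 ≤ ζ₀ then α₀ else β₀) + p.2, p.1))
            ∂(νZ.prod νε)
          = ∫ p : ℝ × ℝ, u p.1 * v p.2 ∂(νZ.prod νε) := by rw [hcomp]
        _ = (∫ z, u z ∂νZ) * ∫ e, v e ∂νε := integral_prod_mul u v
  -- strong law wrapper
  have hsl : ∀ (φ : ℝ × ℝ → ℝ) (u v : ℝ → ℝ), Measurable φ → Measurable u → Measurable v →
      Integrable u νZ → Integrable v νε →
      (∀ x, φ x = u x.2 * v (epstil (α₀, β₀, ζ₀) x)) →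
      ∀ᵐ ω ∂P, Tendsto (fun n : ℕ => (n:ℝ)⁻¹ * ∑ i ∈ Finset.range n, φ (Xd i ω))
        atTop (𝓝 ((∫ z, u z ∂νZ) * ∫ e, v e ∂νε)) := by
    intro φ u v hφ hu hv hIu hIv hid
    obtain ⟨hI1, hI2⟩ := hpd_int u v hu hv hIu hIv
    have hIntφ : Integrable φ
        (Measure.map (fun p : ℝ × ℝ => ((if p.1 ≤ ζ₀ then α₀ else β₀) + p.2, p.1))
          (νZ.prod νε)) :=
      hI1.congr (ae_of_all _ fun x => (hid x).symm)
    have hIval : ∫ x, φ x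
        ∂(Measure.map (fun p : ℝ × ℝ => ((if p.1 ≤ ζ₀ then α₀ else β₀) + p.2, p.1))
          (νZ.prod νε)) = (∫ z, u z ∂νZ) * ∫ e, v e ∂νε := by
      rw [integral_congr_ae (ae_of_all _ hid), hI2]
    have := slln_comp P _ Xd hXdMeas hXdLaw hXdIndep φ hφ hIntφ
    rwa [hIval] at this
  -- integral values over νZ
  have hone : ∫ z, (1:ℝ) ∂νZ = 1 := by simp
  have honeε : ∫ e, (1:ℝ) ∂νε = 1 := by simp
  have hIicInt : ∀ q : ℝ, ∫ z, (if z ≤ q then (1:ℝ) else 0) ∂νZ = (νZ (Iic q)).toReal := by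
    intro q
    rw [show (fun z => if z ≤ q then (1:ℝ) else 0) = (Iic q).indicator (fun _ => (1:ℝ))
      from funext fun z => by simp [Set.indicator_apply]]
    rw [integral_indicator_const (1:ℝ) measurableSet_Iic, smul_eq_mul, mul_one, measureReal_def]
  have hIioInt : ∫ z, (if z < a then (1:ℝ) else 0) ∂νZ = (νZ (Iio a)).toReal := by
    rw [show (fun z => if z < a then (1:ℝ) else 0) = (Iio a).indicator (fun _ => (1:ℝ))
      from funext fun z => by simp [Set.indicator_apply]]
    rw [integral_indicator_const (1:ℝ) measurableSet_Iio, smul_eq_mul, mul_one, measureReal_def]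
  have hIoiInt : ∫ z, (if b < z then (1:ℝ) else 0) ∂νZ = (νZ (Ioi b)).toReal := by
    rw [show (fun z => if b < z then (1:ℝ) else 0) = (Ioi b).indicator (fun _ => (1:ℝ))
      from funext fun z => by simp [Set.indicator_apply]]
    rw [integral_indicator_const (1:ℝ) measurableSet_Ioi, smul_eq_mul, mul_one, measureReal_def]
  -- bounded indicator integrability over νZ
  have hbnd : ∀ g : ℝ → ℝ, Measurable g → (∀ z, |g z| ≤ 1) → Integrable g νZ := by
    intro g hg hb
    apply (integrable_const (1:ℝ)).mono' hg.aestronglyMeasurable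
    filter_upwards with z
    rw [Real.norm_eq_abs]
    exact hb z
  have hite1 : ∀ c : ℝ, ∀ z : ℝ, |if z < c then (1:ℝ) else 0| ≤ 1 := by
    intro c z; split_ifs <;> norm_num
  have hite2 : ∀ c : ℝ, ∀ z : ℝ, |if c < z then (1:ℝ) else 0| ≤ 1 := by
    intro c z; split_ifs <;> norm_num
  have hite3 : ∀ c : ℝ, ∀ z : ℝ, |if z ≤ c then (1:ℝ) else 0| ≤ 1 := by
    intro c z; split_ifs <;> norm_num
  -- Ep = Em
  have hEpEm : ∫ e, max e 0 ∂νε = ∫ e, max (-e) 0 ∂νε := by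
    have h := integral_sub hIntMax hIntMaxN
    rw [show (fun e : ℝ => max e 0 - max (-e) 0) = fun e : ℝ => e
      from funext fun e => maxsub e] at h
    rw [hεmean] at h
    linarith
  have hEp : 0 ≤ ∫ e, max e 0 ∂νε := integral_nonneg fun e => le_max_right e 0
  -- positivity of pa, pb
  have hpa : 0 < (νZ (Iio a)).toReal := ENNReal.toReal_pos (ne_of_gt hZa) (measure_ne_top _ _)
  have hpb : 0 < (νZ (Ioi b)).toReal := ENNReal.toReal_pos (ne_of_gt hZb) (measure_ne_top _ _)
  -- a.e. convergence facts
  have hae1 : ∀ᵐ ω ∂P, Tendsto (fun n : ℕ => (n:ℝ)⁻¹ * ∑ i ∈ Finset.range n,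
      epstil (α₀, β₀, ζ₀) (Xd i ω)) atTop (𝓝 0) := by
    have h := hsl (fun x => epstil (α₀, β₀, ζ₀) x) (fun _ => 1) (fun e => e)
      hmeps measurable_const measurable_id (integrable_const 1) hInt1 (fun x => by simp)
    rwa [show (∫ z, (1:ℝ) ∂νZ) * ∫ e, e ∂νε = 0 by rw [hone, hεmean, mul_zero]] at h
  have hae2 : ∀ᵐ ω ∂P, Tendsto (fun n : ℕ => (n:ℝ)⁻¹ * ∑ i ∈ Finset.range n,
      (epstil (α₀, β₀, ζ₀) (Xd i ω))^2) atTop (𝓝 σ2) := by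
    have h := hsl (fun x => (epstil (α₀, β₀, ζ₀) x)^2) (fun _ => 1) (fun e => e^2)
      (hmeps.pow_const 2) measurable_const (measurable_id.pow_const 2)
      (integrable_const 1) hεL2 (fun x => by simp)
    rwa [show (∫ z, (1:ℝ) ∂νZ) * ∫ e, e^2 ∂νε = σ2 by rw [hone, one_mul, hεvar]] at h
  have hae3 : ∀ᵐ ω ∂P, Tendsto (fun n : ℕ => (n:ℝ)⁻¹ * ∑ i ∈ Finset.range n,
      |epstil (α₀, β₀, ζ₀) (Xd i ω)|) atTop (𝓝 (∫ x : ℝ, |x| ∂νε)) := by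
    have h := hsl (fun x => |epstil (α₀, β₀, ζ₀) x|) (fun _ => 1) (fun e => |e|)
      hmeps.abs measurable_const measurable_id.abs (integrable_const 1) hIntAbs
      (fun x => by simp)
    rwa [hone, one_mul] at h
  have hae4 : ∀ᵐ ω ∂P, Tendsto (fun n : ℕ => (n:ℝ)⁻¹ * ∑ i ∈ Finset.range n,
      |epstil (α₀, β₀, ζ₀) (Xd i ω)|^3) atTop (𝓝 (∫ x : ℝ, |x|^3 ∂νε)) := by
    have h := hsl (fun x => |epstil (α₀, β₀, ζ₀) x|^3) (fun _ => 1) (fun e => |e|^3)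
      (hmeps.abs.pow_const 3) measurable_const (measurable_id.abs.pow_const 3)
      (integrable_const 1) hεL3 (fun x => by simp)
    rwa [hone, one_mul] at h
  have hae5 : ∀ᵐ ω ∂P, Tendsto (fun n : ℕ => (n:ℝ)⁻¹ * ∑ i ∈ Finset.range n,
      (if (Xd i ω).2 < a then (1:ℝ) else 0)) atTop (𝓝 ((νZ (Iio a)).toReal)) := by
    have h := hsl (fun x => if x.2 < a then (1:ℝ) else 0)
      (fun z => if z < a then (1:ℝ) else 0) (fun _ => 1)
      (Measurable.ite (measurable_snd measurableSet_Iio) measurable_const measurable_const)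
      (Measurable.ite measurableSet_Iio measurable_const measurable_const)
      measurable_const (hbnd _ (Measurable.ite measurableSet_Iio measurable_const
        measurable_const) (hite1 a)) (integrable_const 1) (fun x => by simp)
    rwa [hIioInt, honeε, mul_one] at h
  have hae6 : ∀ᵐ ω ∂P, Tendsto (fun n : ℕ => (n:ℝ)⁻¹ * ∑ i ∈ Finset.range n,
      (if b < (Xd i ω).2 then (1:ℝ) else 0)) atTop (𝓝 ((νZ (Ioi b)).toReal)) := by
    have h := hsl (fun x => if b < x.2 then (1:ℝ) else 0)
      (fun z => if b < z then (1:ℝ) else 0) (fun _ => 1)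
      (Measurable.ite (measurable_snd measurableSet_Ioi) measurable_const measurable_const)
      (Measurable.ite measurableSet_Ioi measurable_const measurable_const)
      measurable_const (hbnd _ (Measurable.ite measurableSet_Ioi measurable_const
        measurable_const) (hite2 b)) (integrable_const 1) (fun x => by simp)
    rwa [hIoiInt, honeε, mul_one] at h
  have hae7 : ∀ q : ℚ, ∀ᵐ ω ∂P, Tendsto (fun n : ℕ => (n:ℝ)⁻¹ * ∑ i ∈ Finset.range n,
      (if (Xd i ω).2 ≤ (q:ℝ) then (1:ℝ) else 0) * max (epstil (α₀, β₀, ζ₀) (Xd i ω)) 0)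
      atTop (𝓝 ((νZ (Iic (q:ℝ))).toReal * ∫ e, max e 0 ∂νε)) := by
    intro q
    have h := hsl (fun x => (if x.2 ≤ (q:ℝ) then (1:ℝ) else 0)
        * max (epstil (α₀, β₀, ζ₀) x) 0)
      (fun z => if z ≤ (q:ℝ) then (1:ℝ) else 0) (fun e => max e 0)
      ((Measurable.ite (measurable_snd measurableSet_Iic) measurable_const
        measurable_const).mul (hmeps.max measurable_const))
      (Measurable.ite measurableSet_Iic measurable_const measurable_const)
      (measurable_id.max measurable_const)
      (hbnd _ (Measurable.ite measurableSet_Iic measurable_const measurable_const)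
        (hite3 (q:ℝ))) hIntMax (fun x => rfl)
    rwa [hIicInt (q:ℝ)] at h
  have hae8 : ∀ q : ℚ, ∀ᵐ ω ∂P, Tendsto (fun n : ℕ => (n:ℝ)⁻¹ * ∑ i ∈ Finset.range n,
      (if (Xd i ω).2 ≤ (q:ℝ) then (1:ℝ) else 0) * max (-(epstil (α₀, β₀, ζ₀) (Xd i ω))) 0)
      atTop (𝓝 ((νZ (Iic (q:ℝ))).toReal * ∫ e, max e 0 ∂νε)) := by
    intro q
    have h := hsl (fun x => (if x.2 ≤ (q:ℝ) then (1:ℝ) else 0)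
        * max (-(epstil (α₀, β₀, ζ₀) x)) 0)
      (fun z => if z ≤ (q:ℝ) then (1:ℝ) else 0) (fun e => max (-e) 0)
      ((Measurable.ite (measurable_snd measurableSet_Iic) measurable_const
        measurable_const).mul (hmeps.neg.max measurable_const))
      (Measurable.ite measurableSet_Iic measurable_const measurable_const)
      (measurable_id.neg.max measurable_const)
      (hbnd _ (Measurable.ite measurableSet_Iic measurable_const measurable_const)
        (hite3 (q:ℝ))) hIntMaxN (fun x => rfl)
    rwa [hIicInt (q:ℝ), ← hEpEm] at h
  have hGP : ∀ᵐ ω ∂P, ∀ q : ℚ, Tendsto (fun n : ℕ => (n:ℝ)⁻¹ * ∑ i ∈ Finset.range n,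
      (if (Xd i ω).2 ≤ (q:ℝ) then (1:ℝ) else 0) * max (epstil (α₀, β₀, ζ₀) (Xd i ω)) 0)
      atTop (𝓝 ((νZ (Iic (q:ℝ))).toReal * ∫ e, max e 0 ∂νε)) := ae_all_iff.mpr hae7
  have hGM : ∀ᵐ ω ∂P, ∀ q : ℚ, Tendsto (fun n : ℕ => (n:ℝ)⁻¹ * ∑ i ∈ Finset.range n,
      (if (Xd i ω).2 ≤ (q:ℝ) then (1:ℝ) else 0) * max (-(epstil (α₀, β₀, ζ₀) (Xd i ω))) 0)
      atTop (𝓝 ((νZ (Iic (q:ℝ))).toReal * ∫ e, max e 0 ∂νε)) := ae_all_iff.mpr hae8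
  have hMax : ∀ᵐ ω ∂P, ∀ n : ℕ, (θhat n ω).2.2 ∈ Icc a b ∧
      ∀ θ : ℝ × ℝ × ℝ, θ.2.2 ∈ Icc a b →
        (n : ℝ)⁻¹ * ∑ i ∈ Finset.range n, mfn θ (Xd i ω)
          ≤ (n : ℝ)⁻¹ * ∑ i ∈ Finset.range n, mfn (θhat n ω) (Xd i ω) :=
    ae_all_iff.mpr hθhatMax
  have hFlip : ∀ x y : ℝ, x ≤ y →
      0 ≤ (νZ (Iic y)).toReal - (νZ (Iic x)).toReal ∧
      (νZ (Iic y)).toReal - (νZ (Iic x)).toReal ≤ (max Cf 0) * (y - x) :=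
    fun x y hxy => cdf_lip hCf νZ hνZ hxy
  refine ⟨?_, ?_, ?_⟩
  · filter_upwards [hae1, hae2, hae3, hae4, hae5, hae6, hGP, hGM, hMax] with
      ω h1 h2 h3 h4 h5 h6 h7 h8 h9
    exact (core α₀ β₀ a b ζ₀ σ2 (∫ x : ℝ, |x| ∂νε) (∫ x : ℝ, |x|^3 ∂νε)
      ((νZ (Iio a)).toReal) ((νZ (Ioi b)).toReal) (∫ e, max e 0 ∂νε) (max Cf 0)
      (fun ζ => (νZ (Iic ζ)).toReal) hζ₀ hpa hpb (le_max_right _ _) hEp hFlip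
      (fun i => Xd i ω) (fun n => θhat n ω) h1 h2 h3 h4 h5 h6 h7 h8 h9).1
  · filter_upwards [hae1, hae2, hae3, hae4, hae5, hae6, hGP, hGM, hMax] with
      ω h1 h2 h3 h4 h5 h6 h7 h8 h9
    exact (core α₀ β₀ a b ζ₀ σ2 (∫ x : ℝ, |x| ∂νε) (∫ x : ℝ, |x|^3 ∂νε)
      ((νZ (Iio a)).toReal) ((νZ (Ioi b)).toReal) (∫ e, max e 0 ∂νε) (max Cf 0)
      (fun ζ => (νZ (Iic ζ)).toReal) hζ₀ hpa hpb (le_max_right _ _) hEp hFlip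
      (fun i => Xd i ω) (fun n => θhat n ω) h1 h2 h3 h4 h5 h6 h7 h8 h9).2.1
  · filter_upwards [hae1, hae2, hae3, hae4, hae5, hae6, hGP, hGM, hMax] with
      ω h1 h2 h3 h4 h5 h6 h7 h8 h9
    exact (core α₀ β₀ a b ζ₀ σ2 (∫ x : ℝ, |x| ∂νε) (∫ x : ℝ, |x|^3 ∂νε)
      ((νZ (Iio a)).toReal) ((νZ (Ioi b)).toReal) (∫ e, max e 0 ∂νε) (max Cf 0)
      (fun ζ => (νZ (Iic ζ)).toReal) hζ₀ hpa hpb (le_max_right _ _) hEp hFlip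
      (fun i => Xd i ω) (fun n => θhat n ω) h1 h2 h3 h4 h5 h6 h7 h8 h9).2.2
end
end

section
/- Let B > 0 and ρ ∈ (0, 1/2). For λ > 0, set L^ρ_{λ+B} = min{n ∈ ℕ : H_{λ+B}(n) > ρ} and U^ρ_λ = max{n ∈ ℕ : 1 − H_λ(n) > ρ}. Then there exists λ* > 0 such that L^ρ_{λ+B} < U^ρ_λ for all λ ≥ λ*. (Lemma A.9: separation of lower and upper Poisson quantiles for large intensity.) -/
open Filter

/-- The CDF of the Poisson distribution with mean `lam`, evaluated at `n`. -/
noncomputable def poissonCDF (lam : ℝ) (n : ℕ) : ℝ :=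
  Real.exp (-lam) * ∑ k ∈ Finset.range (n + 1), lam ^ k / (Nat.factorial k)

open Finset Topology

private lemma poissonCDF_succ (μ : ℝ) (n : ℕ) :
    poissonCDF μ (n + 1) = poissonCDF μ n
      + Real.exp (-μ) * (μ ^ (n + 1) / (Nat.factorial (n + 1))) := by
  simp only [poissonCDF, Finset.sum_range_succ]
  ring

private lemma poissonCDF_mono (μ : ℝ) (hμ : 0 ≤ μ) : Monotone (poissonCDF μ) := by
  apply monotone_nat_of_le_succ
  intro n
  rw [poissonCDF_succ]
  have : 0 ≤ Real.exp (-μ) * (μ ^ (n + 1) / (Nat.factorial (n + 1))) := by positivity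
  linarith

private lemma poissonCDF_tendsto (μ : ℝ) : Tendsto (fun n => poissonCDF μ n) atTop (𝓝 1) := by
  have hs : HasSum (fun k : ℕ => μ ^ k / (Nat.factorial k)) (Real.exp μ) := by
    rw [Real.exp_eq_exp_ℝ]
    exact NormedSpace.expSeries_div_hasSum_exp μ
  have h1 := hs.tendsto_sum_nat
  have h2 : Tendsto (fun n : ℕ => ∑ k ∈ Finset.range (n + 1), μ ^ k / (Nat.factorial k))
      atTop (𝓝 (Real.exp μ)) := h1.comp (tendsto_add_atTop_nat 1)
  have h3 := h2.const_mul (Real.exp (-μ))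
  simpa [poissonCDF, Real.exp_neg, inv_mul_cancel₀ (Real.exp_ne_zero μ)] using h3

private lemma pois_aux_up (μ : ℝ) (hμ : 0 < μ) (i : ℕ) :
    ∀ j, i ≤ j → (j : ℝ) ≤ μ → μ ^ i / (Nat.factorial i) ≤ μ ^ j / (Nat.factorial j) := by
  intro j
  induction j with
  | zero => intro h _; interval_cases i; exact le_rfl
  | succ n ih =>
    intro hij hle
    rcases Nat.lt_or_ge i (n + 1) with h | h
    · have hn : (n : ℝ) ≤ μ := by
        have : (n : ℝ) ≤ (n + 1 : ℕ) := by push_cast; linarith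
        linarith
      refine (ih (Nat.lt_succ_iff.mp h) hn).trans ?_
      rw [Nat.factorial_succ, pow_succ]
      rw [div_le_div_iff₀ (by positivity) (by positivity)]
      push_cast
      have h2 : (0:ℝ) ≤ μ ^ n * (Nat.factorial n) := by positivity
      nlinarith [mul_le_mul_of_nonneg_left (show ((n:ℝ)+1) ≤ μ by push_cast at hle; linarith) h2]
    · have : i = n + 1 := le_antisymm hij h
      subst this; exact le_rfl

private lemma pois_aux_down (μ : ℝ) (hμ : 0 < μ) (j : ℕ) (hlt : μ < (j : ℝ) + 1) :
    ∀ i, j ≤ i → μ ^ i / (Nat.factorial i) ≤ μ ^ j / (Nat.factorial j) := by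
  intro i
  induction i with
  | zero => intro h; interval_cases j; exact le_rfl
  | succ n ih =>
    intro hji
    rcases Nat.lt_or_ge j (n + 1) with h | h
    · have hn := ih (Nat.lt_succ_iff.mp h)
      refine le_trans ?_ hn
      rw [Nat.factorial_succ, pow_succ]
      rw [div_le_div_iff₀ (by positivity) (by positivity)]
      push_cast
      have h2 : (0:ℝ) ≤ μ ^ n * (Nat.factorial n) := by positivity
      have h3 : (j : ℝ) ≤ n := by exact_mod_cast Nat.lt_succ_iff.mp h
      nlinarith [mul_le_mul_of_nonneg_left (show μ ≤ ((n:ℝ)+1) by linarith) h2]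
    · have : j = n + 1 := le_antisymm (by omega) h
      subst this; exact le_rfl

private lemma pois_pmf_max : ∃ c : ℝ, 0 < c ∧ ∀ μ : ℝ, 2 ≤ μ → ∀ k : ℕ,
    Real.exp (-μ) * (μ ^ k / (Nat.factorial k)) ≤ c / Real.sqrt μ := by
  obtain ⟨a, ha, hstir⟩ := Stirling.stirlingSeq'_bounded_by_pos_constant
  refine ⟨1 / a, by positivity, ?_⟩
  intro μ hμ k
  have hμ0 : (0 : ℝ) < μ := by linarith
  set m := Nat.floor μ with hm
  have hm1 : 1 ≤ m := Nat.le_floor (by exact_mod_cast (by linarith : (1:ℝ) ≤ μ))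
  have hmle : (m : ℝ) ≤ μ := Nat.floor_le hμ0.le
  have hmlt : μ < (m : ℝ) + 1 := Nat.lt_floor_add_one μ
  clear_value m
  have hm0 : (0 : ℝ) < m := by exact_mod_cast hm1
  have step1 : μ ^ k / (Nat.factorial k) ≤ μ ^ m / (Nat.factorial m) := by
    rcases le_or_gt k m with h | h
    · exact pois_aux_up μ hμ0 k m h hmle
    · exact pois_aux_down μ hμ0 m hmlt k h.le
  have step2 : Real.exp (-μ) * μ ^ m ≤ Real.exp (-(m : ℝ)) * (m : ℝ) ^ m := by
    have hlog : Real.log (μ / m) ≤ μ / m - 1 := Real.log_le_sub_one_of_pos (by positivity)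
    have key : (m : ℝ) * Real.log μ - μ ≤ (m : ℝ) * Real.log m - m := by
      have := mul_le_mul_of_nonneg_left hlog hm0.le
      rw [Real.log_div (ne_of_gt hμ0) (ne_of_gt hm0)] at this
      have h2 : (m : ℝ) * (μ / m - 1) = μ - m := by field_simp
      rw [h2] at this
      linarith [this]
    calc Real.exp (-μ) * μ ^ m = Real.exp ((m : ℝ) * Real.log μ - μ) := by
          rw [Real.exp_sub, Real.exp_neg]
          rw [Real.exp_nat_mul, Real.exp_log hμ0]
          ring
      _ ≤ Real.exp ((m : ℝ) * Real.log m - m) := Real.exp_le_exp.mpr key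
      _ = Real.exp (-(m : ℝ)) * (m : ℝ) ^ m := by
          rw [Real.exp_sub, Real.exp_neg]
          rw [Real.exp_nat_mul, Real.exp_log hm0]
          ring
  have step3 : a * Real.sqrt (2 * m) * ((m : ℝ) / Real.exp 1) ^ m ≤ (Nat.factorial m) := by
    obtain ⟨m', rfl⟩ : ∃ m', m = m' + 1 := ⟨m - 1, by omega⟩
    have := hstir m'
    rw [Stirling.stirlingSeq] at this
    rw [le_div_iff₀ (by positivity)] at this
    linarith [this]
  have hfac : (0:ℝ) < (Nat.factorial m : ℝ) := by exact_mod_cast Nat.factorial_pos m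
  have h2m : μ ≤ 2 * (m : ℝ) := by linarith
  have hsq : Real.sqrt μ ≤ Real.sqrt (2 * m) := Real.sqrt_le_sqrt h2m
  have hsqpos : 0 < Real.sqrt μ := Real.sqrt_pos.mpr hμ0
  have hexp : Real.exp 1 ^ m = Real.exp m := by rw [← Real.exp_nat_mul]; norm_num
  have e1 : Real.exp (-(m : ℝ)) * (m : ℝ) ^ m = ((m : ℝ) / Real.exp 1) ^ m := by
    rw [div_pow, hexp, Real.exp_neg]; ring
  have step4 : Real.exp (-(m : ℝ)) * (m : ℝ) ^ m / (Nat.factorial m) ≤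
      1 / (a * Real.sqrt (2 * m)) := by
    rw [e1, div_le_div_iff₀ hfac (by positivity)]
    nlinarith [step3]
  calc Real.exp (-μ) * (μ ^ k / (Nat.factorial k))
      ≤ Real.exp (-μ) * (μ ^ m / (Nat.factorial m)) :=
        mul_le_mul_of_nonneg_left step1 (Real.exp_pos _).le
    _ = Real.exp (-μ) * μ ^ m / (Nat.factorial m) := by ring
    _ ≤ Real.exp (-(m : ℝ)) * (m : ℝ) ^ m / (Nat.factorial m) := by gcongr
    _ ≤ 1 / (a * Real.sqrt (2 * m)) := step4
    _ ≤ 1 / (a * Real.sqrt μ) := by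
        apply one_div_le_one_div_of_le (by positivity)
        gcongr
    _ = 1 / a / Real.sqrt μ := (div_div 1 a _).symm

private lemma hasDerivAt_poissonCDF (n : ℕ) (t : ℝ) :
    HasDerivAt (fun s => poissonCDF s n)
      (-(Real.exp (-t) * (t ^ n / (Nat.factorial n)))) t := by
  have hS : HasDerivAt (fun s : ℝ => ∑ k ∈ Finset.range (n + 1), s ^ k / (Nat.factorial k))
      (∑ k ∈ Finset.range n, t ^ k / (Nat.factorial k)) t := by
    have h1 : HasDerivAt (fun s : ℝ => ∑ k ∈ Finset.range (n + 1), s ^ k / (Nat.factorial k))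
        (∑ k ∈ Finset.range (n + 1), (k : ℝ) * t ^ (k - 1) / (Nat.factorial k)) t := by
      apply HasDerivAt.fun_sum
      intro k _
      simpa using (hasDerivAt_pow k t).div_const (Nat.factorial k : ℝ)
    convert h1 using 1
    rw [Finset.sum_range_succ']
    simp only [Nat.cast_zero, zero_mul, Nat.factorial_zero, Nat.cast_one, zero_div, add_zero]
    apply Finset.sum_congr rfl
    intro j _
    rw [Nat.factorial_succ]
    push_cast
    have hj : ((j : ℝ) + 1) ≠ 0 := by positivity
    have hf : ((Nat.factorial j : ℝ)) ≠ 0 := by positivity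
    field_simp
  have hE : HasDerivAt (fun s : ℝ => Real.exp (-s)) (-Real.exp (-t)) t := by
    simpa using ((hasDerivAt_neg t).exp)
  have := hE.mul hS
  refine this.congr_deriv ?_
  have hsplit : ∑ k ∈ Finset.range (n + 1), t ^ k / (Nat.factorial k)
      = (∑ k ∈ Finset.range n, t ^ k / (Nat.factorial k)) + t ^ n / (Nat.factorial n) :=
    Finset.sum_range_succ _ n
  rw [hsplit]
  ring

private lemma pois_cdf_lipschitz (c : ℝ) (hc : 0 < c)
    (hpmf : ∀ μ : ℝ, 2 ≤ μ → ∀ k : ℕ,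
      Real.exp (-μ) * (μ ^ k / (Nat.factorial k)) ≤ c / Real.sqrt μ)
    (lam B : ℝ) (hlam : 2 ≤ lam) (hB : 0 ≤ B) (n : ℕ) :
    |poissonCDF lam n - poissonCDF (lam + B) n| ≤ c / Real.sqrt lam * B := by
  have hconv : Convex ℝ (Set.Icc lam (lam + B)) := convex_Icc _ _
  have key := hconv.norm_image_sub_le_of_norm_hasDerivWithin_le
    (f := fun s => poissonCDF s n)
    (f' := fun s => -(Real.exp (-s) * (s ^ n / (Nat.factorial n))))
    (C := c / Real.sqrt lam)
    (fun x _ => (hasDerivAt_poissonCDF n x).hasDerivWithinAt)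
    (fun x hx => by
      rcases hx with ⟨hx1, _⟩
      have hx2 : (2 : ℝ) ≤ x := le_trans hlam hx1
      have hx0 : (0 : ℝ) < x := by linarith
      rw [Real.norm_eq_abs, abs_neg, abs_of_nonneg (by positivity)]
      calc Real.exp (-x) * (x ^ n / (Nat.factorial n)) ≤ c / Real.sqrt x := hpmf x hx2 n
        _ ≤ c / Real.sqrt lam := by
            apply div_le_div_of_nonneg_left hc.le
            · exact Real.sqrt_pos.mpr (by linarith)
            · exact Real.sqrt_le_sqrt hx1)
    (Set.left_mem_Icc.mpr (by linarith))
    (Set.right_mem_Icc.mpr (by linarith))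
  rw [Real.norm_eq_abs] at key
  rw [abs_sub_comm]
  calc |poissonCDF (lam + B) n - poissonCDF lam n| ≤ c / Real.sqrt lam * ‖lam + B - lam‖ := key
    _ = c / Real.sqrt lam * B := by
        rw [Real.norm_eq_abs]
        congr 1
        rw [add_sub_cancel_left, abs_of_nonneg hB]

/-- Lemma A.9: separation of lower and upper Poisson quantiles for large intensity.
`L^ρ_{λ+B} = min {n | H_{λ+B}(n) > ρ}` and `U^ρ_λ = max {n | 1 − H_λ(n) > ρ}`. -/
theorem stmt18 (B ρ : ℝ) (hB : 0 < B) (hρ0 : 0 < ρ) (hρ : ρ < 1 / 2) :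
    ∃ lamStar > (0 : ℝ), ∀ lam ≥ lamStar,
      sInf {n : ℕ | ρ < poissonCDF (lam + B) n} <
        sSup {n : ℕ | ρ < 1 - poissonCDF lam n} := by
  obtain ⟨c, hc, hpmf⟩ := pois_pmf_max
  refine ⟨max (max 2 (Real.log (1 / ρ))) (((2 * c + c * B) / (1 - 2 * ρ)) ^ 2 + 1),
    lt_of_lt_of_le (by norm_num) (le_trans (le_max_left _ _) (le_max_left _ _)), ?_⟩
  intro lam hlam
  have h2 : (2 : ℝ) ≤ lam :=
    le_trans (le_trans (le_max_left _ _) (le_max_left _ _)) hlam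
  have hlog : Real.log (1 / ρ) ≤ lam :=
    le_trans (le_trans (le_max_right _ _) (le_max_left _ _)) hlam
  have hsqh : ((2 * c + c * B) / (1 - 2 * ρ)) ^ 2 + 1 ≤ lam :=
    le_trans (le_max_right _ _) hlam
  have hlam0 : (0 : ℝ) < lam := by linarith
  set μ := lam + B with hμdef
  have hμ2 : (2 : ℝ) ≤ μ := by simp only [hμdef]; linarith
  have hμ0 : (0 : ℝ) < μ := by linarith
  -- the lower set is nonempty
  have hne : Set.Nonempty {n : ℕ | ρ < poissonCDF μ n} := by
    have hev := (poissonCDF_tendsto μ).eventually (eventually_gt_nhds (by linarith : ρ < 1))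
    obtain ⟨n, hn⟩ := hev.exists
    exact ⟨n, hn⟩
  set n₀ := sInf {n : ℕ | ρ < poissonCDF μ n} with hn₀def
  have hmem : ρ < poissonCDF μ n₀ := Nat.sInf_mem hne
  -- n₀ ≥ 1
  have hcdf0 : poissonCDF μ 0 ≤ ρ := by
    have hexp : Real.exp (-μ) ≤ ρ := by
      rw [← Real.exp_log hρ0]
      apply Real.exp_le_exp.mpr
      have h1 : Real.log (1 / ρ) = -Real.log ρ := by rw [one_div, Real.log_inv]
      simp only [hμdef]
      linarith
    simpa [poissonCDF] using hexp
  have hn₀pos : 1 ≤ n₀ := by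
    by_contra h
    push_neg at h
    interval_cases n₀
    · exact absurd hmem (not_lt.mpr hcdf0)
  obtain ⟨m, hm⟩ : ∃ m, n₀ = m + 1 := ⟨n₀ - 1, by omega⟩
  have hnotmem : poissonCDF μ m ≤ ρ := by
    have : m ∉ {n : ℕ | ρ < poissonCDF μ n} := Nat.notMem_of_lt_sInf (by omega)
    simpa [Set.mem_setOf_eq, not_lt] using this
  -- the two pmf terms
  have hsqlam : 0 < Real.sqrt lam := Real.sqrt_pos.mpr hlam0
  have hcc : c / Real.sqrt μ ≤ c / Real.sqrt lam := by
    apply div_le_div_of_nonneg_left hc.le hsqlam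
    apply Real.sqrt_le_sqrt
    linarith
  have hterm : ∀ k : ℕ, Real.exp (-μ) * (μ ^ k / (Nat.factorial k)) ≤ c / Real.sqrt lam :=
    fun k => le_trans (hpmf μ hμ2 k) hcc
  have hμcdf : poissonCDF μ (m + 2) ≤ ρ + 2 * (c / Real.sqrt lam) := by
    have e1 := poissonCDF_succ μ m
    have e2 := poissonCDF_succ μ (m + 1)
    have t1 := hterm (m + 1)
    have t2 := hterm (m + 2)
    rw [e1] at e2
    rw [e2]
    linarith
  have hlip := pois_cdf_lipschitz c hc hpmf lam B h2 hB.le (m + 2)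
  have habs := abs_le.mp hlip
  have hlamcdf : poissonCDF lam (m + 2) ≤ ρ + 2 * (c / Real.sqrt lam)
      + c / Real.sqrt lam * B := by
    have h3 := habs.2
    linarith [h3]
  -- gap estimate
  have hgap : 2 * (c / Real.sqrt lam) + c / Real.sqrt lam * B < 1 - 2 * ρ := by
    have h1 : (0 : ℝ) < 1 - 2 * ρ := by linarith
    have hsqrt : (2 * c + c * B) / (1 - 2 * ρ) < Real.sqrt lam := by
      have hlt : ((2 * c + c * B) / (1 - 2 * ρ)) ^ 2 < lam := by linarith
      calc (2 * c + c * B) / (1 - 2 * ρ)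
          = Real.sqrt (((2 * c + c * B) / (1 - 2 * ρ)) ^ 2) :=
            (Real.sqrt_sq (by positivity)).symm
        _ < Real.sqrt lam := Real.sqrt_lt_sqrt (by positivity) hlt
    rw [div_lt_iff₀ h1] at hsqrt
    have heq : 2 * (c / Real.sqrt lam) + c / Real.sqrt lam * B
        = (2 * c + c * B) / Real.sqrt lam := by ring
    rw [heq, div_lt_iff₀ hsqlam]
    nlinarith
  have hkey : ρ < 1 - poissonCDF lam (m + 2) := by linarith
  -- upper set is bounded above
  have hbdd : BddAbove {n : ℕ | ρ < 1 - poissonCDF lam n} := by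
    have hev := (poissonCDF_tendsto lam).eventually
      (eventually_gt_nhds (by linarith : 1 - ρ < 1))
    obtain ⟨N, hN⟩ := eventually_atTop.mp hev
    refine ⟨N, fun n hn => ?_⟩
    by_contra h
    push_neg at h
    have h1 := hN n h.le
    have h2 : ρ < 1 - poissonCDF lam n := hn
    linarith
  have hfinal : m + 2 ≤ sSup {n : ℕ | ρ < 1 - poissonCDF lam n} := le_csSup hbdd hkey
  omega
end
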